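/- arXiv:2102.04863 — 5 statements merged into one kernel-verified Lean document; each statement's English description precedes it below -/
import Mathlib

section
/- Let Θ: A → B be a quantum channel with dim(B) = 2 and coefficients Θ^{i,j}_{k,l} := ⟨k| Θ(|i⟩⟨j|) |l⟩. If there exists an index m ∈ {0,1} such that Θ^{i,j}_{m,m} = 0 for all i, j, then all off-diagonal coefficients vanish: Θ^{i,j}_{k,l} = 0 for all k ≠ l and all i, j. -/
open Matrix Complex
open scoped ComplexOrder

/-- A superoperator: a ℂ-linear map from operators on `ι` to operators on `κ`. -/
abbrev SO (ι κ : Type*) [Fintype ι] [DecidableEq ι] [Fintype κ] [DecidableEq κ] :=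
  Matrix ι ι ℂ →ₗ[ℂ] Matrix κ κ ℂ

/-- Choi matrix of a superoperator. -/
noncomputable def choi {ι κ : Type*} [Fintype ι] [DecidableEq ι] [Fintype κ] [DecidableEq κ]
    (Θ : SO ι κ) : Matrix (κ × ι) (κ × ι) ℂ :=
  Matrix.of fun p q => Θ (Matrix.single p.2 q.2 1) p.1 q.1

/-- A quantum state: positive semidefinite with unit trace. -/
def IsState {ι : Type*} [Fintype ι] (ρ : Matrix ι ι ℂ) : Prop := ρ.PosSemidef ∧ ρ.trace = 1

/-- A quantum channel: completely positive (PSD Choi matrix) and trace preserving. -/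
def IsChannel {ι κ : Type*} [Fintype ι] [DecidableEq ι] [Fintype κ] [DecidableEq κ]
    (Θ : SO ι κ) : Prop :=
  (choi Θ).PosSemidef ∧ ∀ ρ, (Θ ρ).trace = ρ.trace

/-- Total dephasing channel in the fixed incoherent basis. -/
noncomputable def deph {ι : Type*} [Fintype ι] [DecidableEq ι] : SO ι ι where
  toFun ρ := Matrix.of fun i j => if i = j then ρ i j else 0
  map_add' := by
    intro x y; ext i j
    by_cases h : i = j <;> simp [h]
  map_smul' := by
    intro c x; ext i j
    by_cases h : i = j <;> simp [h]

/-- Phase-encoding unitary channel `Λ_φ`. -/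
noncomputable def phaseCh {ι : Type*} [Fintype ι] [DecidableEq ι] (φ : ι → ℝ) : SO ι ι where
  toFun ρ := Matrix.of fun i j => Complex.exp (Complex.I * ((φ i : ℂ) - (φ j : ℂ))) * ρ i j
  map_add' := by
    intro x y; ext i j; simp [mul_add]
  map_smul' := by
    intro c x; ext i j; simp; ring

/-- The superoperator `λ·id − (1−λ)·Λ_φ`. -/
noncomputable def diffOp {ι : Type*} [Fintype ι] [DecidableEq ι] (lam : ℝ) (φ : ι → ℝ) :
    SO ι ι :=
  (lam : ℂ) • LinearMap.id - ((1 - lam : ℝ) : ℂ) • phaseCh φ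

/-- Trace norm of a matrix: sum of singular values. -/
noncomputable def traceNorm {ι : Type*} [Fintype ι] [DecidableEq ι]
    (M : Matrix ι ι ℂ) : ℝ :=
  ∑ i, Real.sqrt ((Matrix.isHermitian_conjTranspose_mul_self M).eigenvalues i)

/-- `Θ ⊗ id` acting on a composite system. -/
noncomputable def tensorId {ι κ ν : Type*} [Fintype ι] [DecidableEq ι] [Fintype κ]
    [DecidableEq κ] [Fintype ν] [DecidableEq ν] (Θ : SO ι κ) : SO (ι × ν) (κ × ν) where
  toFun ρ := Matrix.of fun p q =>
    ∑ i, ∑ j, Θ (Matrix.single i j 1) p.1 q.1 * ρ (i, p.2) (j, q.2)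
  map_add' := by
    intro x y; ext p q
    simp [Matrix.add_apply, mul_add, Finset.sum_add_distrib]
  map_smul' := by
    intro c x; ext p q
    simp only [Matrix.of_apply, Matrix.smul_apply, smul_eq_mul, RingHom.id_apply,
      Finset.mul_sum]
    exact Finset.sum_congr rfl fun i _ => Finset.sum_congr rfl fun j _ => by ring

/-- Detection incoherent channels: `Δ Φ = Δ Φ Δ`. -/
def IsDI {ι κ : Type*} [Fintype ι] [DecidableEq ι] [Fintype κ] [DecidableEq κ]
    (Φ : SO ι κ) : Prop :=
  deph ∘ₗ Φ = deph ∘ₗ Φ ∘ₗ deph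

/-- Maximally incoherent channels: `Ψ Δ = Δ Ψ Δ`. -/
def IsMIO {ι κ : Type*} [Fintype ι] [DecidableEq ι] [Fintype κ] [DecidableEq κ]
    (Ψ : SO ι κ) : Prop :=
  Ψ ∘ₗ deph = deph ∘ₗ Ψ ∘ₗ deph

/-- The pre-processed improvement `M_{λ,φ}(Θ)`. -/
noncomputable def Mpre {α β γ : Type*} [Fintype α] [DecidableEq α] [Fintype β] [DecidableEq β]
    [Fintype γ] [DecidableEq γ] (lam : ℝ) (φ : α → ℝ) (Θ : SO β γ) : ℝ :=
  sSup {x : ℝ | ∃ (Φ : SO α β) (ρ : Matrix α α ℂ), IsChannel Φ ∧ IsDI Φ ∧ IsState ρ ∧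
    x = traceNorm (deph (Θ (Φ (diffOp lam φ ρ))))} - |lam - (1 - lam)|

/-- The post-processed improvement `N_{λ,φ}(Θ)`. -/
noncomputable def Npost {α β γ : Type*} [Fintype α] [DecidableEq α] [Fintype β] [DecidableEq β]
    [Fintype γ] [DecidableEq γ] (lam : ℝ) (φ : γ → ℝ) (Θ : SO α β) : ℝ :=
  sSup {x : ℝ | ∃ (Ψ : SO β γ) (ρ : Matrix α α ℂ), IsChannel Ψ ∧ IsMIO Ψ ∧ IsState ρ ∧
    x = traceNorm (diffOp lam φ (Ψ (Θ (deph ρ))))} - |lam - (1 - lam)|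


lemma psd_row_col_zero {n : Type*} [Fintype n] [DecidableEq n] {M : Matrix n n ℂ}
    (hM : M.PosSemidef) {i : n} (hi : M i i = 0) (j : n) : M i j = 0 ∧ M j i = 0 := by
  obtain ⟨B, rfl⟩ : ∃ B : Matrix n n ℂ, M = Bᴴ * B := by
    open scoped MatrixOrder Matrix.Norms.L2Operator in
    exact CStarAlgebra.nonneg_iff_eq_star_mul_self.mp hM.nonneg
  simp only [Matrix.mul_apply, Matrix.conjTranspose_apply] at hi
  have h3 : ((∑ k, Complex.normSq (B k i) : ℝ) : ℂ) = 0 := by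
    push_cast
    rw [← hi]
    exact Finset.sum_congr rfl fun k _ => Complex.normSq_eq_conj_mul_self
  have h4 : ∑ k, Complex.normSq (B k i) = 0 := by exact_mod_cast h3
  have hcol : ∀ k, B k i = 0 := fun k =>
    Complex.normSq_eq_zero.mp <|
      (Finset.sum_eq_zero_iff_of_nonneg (fun k _ => Complex.normSq_nonneg _)).mp h4 k
        (Finset.mem_univ k)
  constructor <;> simp [Matrix.mul_apply, Matrix.conjTranspose_apply, hcol]

/-- if a channel into a qubit has a vanishing diagonal row of coefficients,
then all off-diagonal coefficients vanish. -/
theorem qubit_offdiag_vanish {ι : Type*} [Fintype ι] [DecidableEq ι]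
    (Θ : SO ι (Fin 2)) (hΘ : IsChannel Θ)
    (h : ∃ m : Fin 2, ∀ i j : ι, Θ (Matrix.single i j 1) m m = 0) :
    ∀ (k l : Fin 2), k ≠ l → ∀ i j : ι, Θ (Matrix.single i j 1) k l = 0 := by
  obtain ⟨m, hm⟩ := h
  intro k l hkl i j
  have hchoi := hΘ.1
  have hdiag : ∀ i : ι, choi Θ (m, i) (m, i) = 0 := fun i => hm i i
  have hrow : ∀ (l : Fin 2) (i j : ι), Θ (Matrix.single i j 1) m l = 0 := fun l i j =>
    (psd_row_col_zero hchoi (hdiag i) (l, j)).1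
  have hcolz : ∀ (k : Fin 2) (i j : ι), Θ (Matrix.single i j 1) k m = 0 := fun k i j =>
    (psd_row_col_zero hchoi (hdiag j) (k, i)).2
  have hkm : k = m ∨ l = m := by fin_cases k <;> fin_cases l <;> fin_cases m <;> simp_all
  rcases hkm with rfl | rfl
  · exact hrow l i j
  · exact hcolz k i j
end

section
/- If Θ is a detection incoherent channel (i.e., ΔΘ = ΔΘΔ) and Λ_φ is the phase-encoding unitary channel Λ_φ(σ) = Σ_{i,j} e^{i(φ_i−φ_j)} |i⟩⟨i| σ |j⟩⟨j|, then for any state ρ and any λ, μ ≥ 0, Δ Θ Φ (λ·id − μ·Λ_φ)(ρ) has trace norm at most |λ − μ| for every detection incoherent channel Φ; equivalently, the pre-processed improvement M_{λ,φ}(Θ) = 0. -/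
open Matrix Complex
open scoped ComplexOrder

section Aux

open scoped MatrixOrder

lemma traceNorm_aux {ι : Type*} [Fintype ι] [DecidableEq ι] (r : ι → ℝ) :
    ∑ i, Real.sqrt ((Matrix.isHermitian_conjTranspose_mul_self
      (Matrix.diagonal (fun i => (r i : ℂ)))).eigenvalues i) = ∑ i, |r i| := by
  set M : Matrix ι ι ℂ := Matrix.diagonal (fun i => (r i : ℂ)) with hM
  have hN : (Mᴴ * M).PosSemidef := Matrix.posSemidef_conjTranspose_mul_self M
  have hD : (Matrix.diagonal (fun i => ((|r i| : ℝ) : ℂ))).PosSemidef := by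
    refine Matrix.posSemidef_diagonal_iff.mpr fun i => ?_
    exact_mod_cast abs_nonneg (r i)
  have hsq : (Matrix.diagonal (fun i => ((|r i| : ℝ) : ℂ))) ^ 2 = Mᴴ * M := by
    rw [pow_two, hM, Matrix.diagonal_conjTranspose, Matrix.diagonal_mul_diagonal,
      Matrix.diagonal_mul_diagonal]
    congr 1
    funext i
    simp [← Complex.ofReal_mul, abs_mul_abs_self, mul_comm]
  have hDsq := (CFC.sqrt_unique (by rw [← pow_two, hsq]) hD.nonneg).symm
  have htr : (CFC.sqrt (Mᴴ * M)).trace = ∑ i, ((Real.sqrt (hN.1.eigenvalues i)) : ℂ) := by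
    rw [CFC.sqrt_eq_real_sqrt _ hN.nonneg, cfcₙ_eq_cfc, hN.1.cfc_eq, Matrix.IsHermitian.cfc,
      Unitary.conjStarAlgAut_apply, Matrix.trace_mul_cycle]
    rw [Unitary.coe_star_mul_self, one_mul, Matrix.trace_diagonal]
    rfl
  have htr2 : (CFC.sqrt (Mᴴ * M)).trace = ∑ i, ((|r i| : ℝ) : ℂ) := by
    rw [← hDsq, Matrix.trace_diagonal]
  rw [htr] at htr2
  have := congrArg Complex.re htr2
  simpa using this

lemma SO_rep_apply {ι κ : Type*} [Fintype ι] [DecidableEq ι] [Fintype κ] [DecidableEq κ]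
    (Θ : SO ι κ) (ρ : Matrix ι ι ℂ) (p q : κ) :
    Θ ρ p q = ∑ i, ∑ j, ρ i j * choi Θ (p, i) (q, j) := by
  conv_lhs => rw [Matrix.matrix_eq_sum_single ρ]
  rw [map_sum, Matrix.sum_apply]
  refine Finset.sum_congr rfl fun i _ => ?_
  rw [map_sum, Matrix.sum_apply]
  refine Finset.sum_congr rfl fun j _ => ?_
  have : Matrix.single i j (ρ i j) = ρ i j • Matrix.single i j (1:ℂ) := by
    rw [Matrix.smul_single, smul_eq_mul, mul_one]
  rw [this, _root_.map_smul, Matrix.smul_apply, smul_eq_mul, choi]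
  rfl

lemma channel_psd {ι κ : Type*} [Fintype ι] [DecidableEq ι] [Fintype κ] [DecidableEq κ]
    (Θ : SO ι κ) (hC : (choi Θ).PosSemidef) {ρ : Matrix ι ι ℂ} (hρ : ρ.PosSemidef) :
    (Θ ρ).PosSemidef := by
  obtain ⟨B, hB⟩ : ∃ B : Matrix ι ι ℂ, ρ = Bᴴ * B := ⟨CFC.sqrt ρ, by
    rw [← Matrix.star_eq_conjTranspose, (CFC.sqrt_nonneg ρ).isSelfAdjoint.star_eq,
      CFC.sqrt_mul_sqrt_self ρ hρ.nonneg]⟩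
  refine Matrix.PosSemidef.of_dotProduct_mulVec_nonneg ?_ ?_
  · ext p q
    rw [Matrix.conjTranspose_apply, SO_rep_apply, SO_rep_apply]
    rw [star_sum]
    rw [Finset.sum_comm]
    refine Finset.sum_congr rfl fun i _ => ?_
    rw [star_sum]
    refine Finset.sum_congr rfl fun j _ => ?_
    rw [star_mul']
    have h1 : star (ρ i j) = ρ j i := by
      conv_rhs => rw [← hρ.1]
      rw [Matrix.conjTranspose_apply]
    have h2 : star (choi Θ (q, i) (p, j)) = choi Θ (p, j) (q, i) := by
      conv_rhs => rw [← hC.1]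
      rw [Matrix.conjTranspose_apply]
    rw [h1, h2]
  · intro x
    have hρeq : ∀ i j, ρ i j = ∑ k, star (B k i) * B k j := by
      intro i j
      rw [hB]
      simp [Matrix.mul_apply, Matrix.conjTranspose_apply]
    set f : κ → κ → ι → ι → ι → ℂ := fun p q i j k =>
      star (x p) * x q * (star (B k i) * B k j) * choi Θ (p, i) (q, j) with hf
    have hA : star x ⬝ᵥ (Θ ρ) *ᵥ x = ∑ p, ∑ q, ∑ i, ∑ j, ∑ k, f p q i j k := by
      simp only [dotProduct, Matrix.mulVec, Pi.star_apply]
      refine Finset.sum_congr rfl fun p _ => ?_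
      rw [Finset.mul_sum]
      refine Finset.sum_congr rfl fun q _ => ?_
      rw [SO_rep_apply]
      simp only [Finset.sum_mul, Finset.mul_sum]
      refine Finset.sum_congr rfl fun i _ => ?_
      refine Finset.sum_congr rfl fun j _ => ?_
      rw [hρeq i j]
      simp only [Finset.sum_mul, Finset.mul_sum]
      refine Finset.sum_congr rfl fun k _ => ?_
      simp only [hf]
      ring
    have hBsum : (∑ k, star (fun pi : κ × ι => x pi.1 * B k pi.2) ⬝ᵥ
          choi Θ *ᵥ (fun pi : κ × ι => x pi.1 * B k pi.2))
        = ∑ k, ∑ p, ∑ i, ∑ q, ∑ j, f p q i j k := by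
      refine Finset.sum_congr rfl fun k _ => ?_
      simp only [dotProduct, Matrix.mulVec, Pi.star_apply, Fintype.sum_prod_type]
      refine Finset.sum_congr rfl fun p _ => ?_
      refine Finset.sum_congr rfl fun i _ => ?_
      simp only [Finset.sum_mul, Finset.mul_sum]
      refine Finset.sum_congr rfl fun q _ => ?_
      refine Finset.sum_congr rfl fun j _ => ?_
      simp only [hf, star_mul']
      ring
    have hswap : (∑ p, ∑ q, ∑ i, ∑ j, ∑ k, f p q i j k)
        = ∑ k, ∑ p, ∑ i, ∑ q, ∑ j, f p q i j k := by
      calc ∑ p, ∑ q, ∑ i, ∑ j, ∑ k, f p q i j k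
          = ∑ p, ∑ q, ∑ i, ∑ k, ∑ j, f p q i j k :=
            Finset.sum_congr rfl fun p _ => Finset.sum_congr rfl fun q _ =>
              Finset.sum_congr rfl fun i _ => Finset.sum_comm
        _ = ∑ p, ∑ q, ∑ k, ∑ i, ∑ j, f p q i j k :=
            Finset.sum_congr rfl fun p _ => Finset.sum_congr rfl fun q _ => Finset.sum_comm
        _ = ∑ p, ∑ k, ∑ q, ∑ i, ∑ j, f p q i j k :=
            Finset.sum_congr rfl fun p _ => Finset.sum_comm
        _ = ∑ k, ∑ p, ∑ q, ∑ i, ∑ j, f p q i j k := Finset.sum_comm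
        _ = ∑ k, ∑ p, ∑ i, ∑ q, ∑ j, f p q i j k :=
            Finset.sum_congr rfl fun k _ => Finset.sum_congr rfl fun p _ => Finset.sum_comm
    rw [hA, hswap, ← hBsum]
    exact Finset.sum_nonneg fun k _ => hC.dotProduct_mulVec_nonneg _

lemma deph_apply' {ι : Type*} [Fintype ι] [DecidableEq ι] (ρ : Matrix ι ι ℂ) :
    deph ρ = Matrix.diagonal (fun i => ρ i i) := by
  ext i j
  by_cases h : i = j <;> simp [deph, Matrix.diagonal_apply, h]

lemma deph_trace {ι : Type*} [Fintype ι] [DecidableEq ι] (ρ : Matrix ι ι ℂ) :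
    (deph ρ).trace = ρ.trace := by
  rw [deph_apply', Matrix.trace_diagonal, Matrix.trace]
  rfl

lemma deph_diffOp {ι : Type*} [Fintype ι] [DecidableEq ι] (lam : ℝ) (φ : ι → ℝ)
    (ρ : Matrix ι ι ℂ) :
    deph (diffOp lam φ ρ) = ((lam - (1 - lam) : ℝ) : ℂ) • deph ρ := by
  ext i j
  show (if i = j then (diffOp lam φ ρ) i j else 0) = _
  rw [Matrix.smul_apply]
  show _ = ((lam - (1 - lam) : ℝ) : ℂ) • (if i = j then ρ i j else 0)
  by_cases h : i = j
  · subst h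
    simp only [if_pos rfl, diffOp, LinearMap.sub_apply, LinearMap.smul_apply, LinearMap.id_apply,
      Matrix.sub_apply, Matrix.smul_apply, phaseCh, LinearMap.coe_mk, AddHom.coe_mk,
      Matrix.of_apply, sub_self, mul_zero, Complex.exp_zero, one_mul, smul_eq_mul]
    push_cast
    ring
  · simp [h]

lemma di_comp {α β γ : Type*} [Fintype α] [DecidableEq α] [Fintype β] [DecidableEq β]
    [Fintype γ] [DecidableEq γ] {Θ : SO β γ} {Φ : SO α β} (hΘ : IsDI Θ) (hΦ : IsDI Φ)
    (X : Matrix α α ℂ) :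
    deph (Θ (Φ X)) = deph (Θ (Φ (deph X))) := by
  have hΘ' : ∀ Y, deph (Θ Y) = deph (Θ (deph Y)) := fun Y => LinearMap.congr_fun hΘ Y
  have hΦ' : ∀ Y, deph (Φ Y) = deph (Φ (deph Y)) := fun Y => LinearMap.congr_fun hΦ Y
  rw [hΘ' (Φ X), hΦ' X, ← hΘ' (Φ (deph X))]

lemma psd_diag {ι : Type*} [Fintype ι] [DecidableEq ι] {M : Matrix ι ι ℂ}
    (h : M.PosSemidef) (i : ι) : M i i = ((M i i).re : ℂ) ∧ 0 ≤ (M i i).re := by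
  have h2 := h.dotProduct_mulVec_nonneg (Pi.single i 1)
  have : star (Pi.single i (1:ℂ)) ⬝ᵥ M *ᵥ Pi.single i 1 = M i i := by
    simp [Matrix.mulVec_single, dotProduct, Pi.single_apply, apply_ite, mul_comm]
  rw [this] at h2
  rw [Complex.le_def] at h2
  obtain ⟨hre, him⟩ := h2
  simp only [Complex.zero_re, Complex.zero_im] at hre him
  exact ⟨Complex.ext rfl him.symm, hre⟩

/-- trace channel: a detection incoherent channel used as witness -/
noncomputable def trCh {α β : Type*} [Fintype α] [DecidableEq α] [Fintype β] [DecidableEq β]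
    (b : β) : SO α β where
  toFun σ := σ.trace • Matrix.single b b 1
  map_add' := by intro x y; rw [Matrix.trace_add, add_smul]
  map_smul' := by intro c x; rw [Matrix.trace_smul, RingHom.id_apply, smul_assoc]

lemma stdBasis_trace {α : Type*} [Fintype α] [DecidableEq α] (i j : α) :
    (Matrix.single i j (1:ℂ)).trace = if i = j then 1 else 0 := by
  by_cases h : i = j
  · subst h; simp [Matrix.trace_single_eq_same]
  · simp [h, Matrix.trace_single_eq_of_ne i j (1:ℂ) h]

lemma trCh_choi_entry {α β : Type*} [Fintype α] [DecidableEq α] [Fintype β] [DecidableEq β]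
    (b : β) (pi qj : β × α) :
    choi (trCh b : SO α β) pi qj =
      ((if pi.1 = b then 1 else 0) * (if qj.1 = b then 1 else 0)) *
        (if pi.2 = qj.2 then 1 else 0) := by
  obtain ⟨p, i⟩ := pi; obtain ⟨q, j⟩ := qj
  show ((Matrix.single i j (1:ℂ)).trace • Matrix.single b b (1:ℂ)) p q = _
  rw [stdBasis_trace, Matrix.smul_apply]
  show (if i = j then (1:ℂ) else 0) * (if b = p ∧ b = q then 1 else 0) = _
  by_cases h1 : p = b <;> by_cases h2 : q = b <;> by_cases h3 : i = j <;>
    simp_all [eq_comm]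

lemma trCh_channel {α β : Type*} [Fintype α] [DecidableEq α] [Fintype β] [DecidableEq β]
    (b : β) : IsChannel (trCh b : SO α β) := by
  refine ⟨Matrix.PosSemidef.of_dotProduct_mulVec_nonneg ?_ ?_, ?_⟩
  · ext pi qj
    rw [Matrix.conjTranspose_apply, trCh_choi_entry, trCh_choi_entry]
    by_cases h1 : pi.1 = b <;> by_cases h2 : qj.1 = b <;> by_cases h3 : pi.2 = qj.2 <;>
      simp [h1, h2, h3, eq_comm]
  · intro x
    have : (choi (trCh b : SO α β)) *ᵥ x = fun pi =>
        (if pi.1 = b then 1 else 0) * x (b, pi.2) := by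
      funext pi
      simp only [Matrix.mulVec, dotProduct, trCh_choi_entry]
      rw [Fintype.sum_prod_type]
      rw [Finset.sum_eq_single b]
      · rw [Finset.sum_eq_single pi.2]
        · simp
        · intro j _ hj; simp [Ne.symm hj, hj]
        · simp
      · intro q _ hq; simp [hq]
      · simp
    rw [this]
    simp only [dotProduct, Pi.star_apply]
    rw [Fintype.sum_prod_type]
    rw [Finset.sum_eq_single b]
    · refine Finset.sum_nonneg fun i _ => ?_
      simpa using star_mul_self_nonneg (x (b, i))
    · intro p _ hp; simp [hp]
    · simp
  · intro ρ
    show (ρ.trace • Matrix.single b b (1:ℂ)).trace = ρ.trace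
    rw [Matrix.trace_smul, Matrix.trace_single_eq_same, smul_eq_mul, mul_one]

lemma trCh_isDI {α β : Type*} [Fintype α] [DecidableEq α] [Fintype β] [DecidableEq β]
    (b : β) : IsDI (trCh b : SO α β) := by
  refine LinearMap.ext fun σ => ?_
  show deph ((trCh b) σ) = deph ((trCh b) (deph σ))
  congr 1
  show σ.trace • Matrix.single b b (1:ℂ)
      = (deph σ).trace • Matrix.single b b (1:ℂ)
  rw [deph_trace]

lemma stdBasis_state {α : Type*} [Fintype α] [DecidableEq α] (a : α) :
    IsState (Matrix.single a a (1:ℂ)) := by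
  refine ⟨Matrix.PosSemidef.of_dotProduct_mulVec_nonneg ?_ ?_, Matrix.trace_single_eq_same a (1:ℂ)⟩
  · ext i j
    show star (if a = j ∧ a = i then (1:ℂ) else 0) = _
    by_cases h1 : a = i <;> by_cases h2 : a = j <;> simp [Matrix.single, h1, h2]
  · intro x
    have : (Matrix.single a a (1:ℂ)) *ᵥ x = fun i => if a = i then x a else 0 := by
      funext i
      simp only [Matrix.mulVec, dotProduct, Matrix.single, Matrix.of_apply]
      rw [Finset.sum_eq_single a] <;> simp +contextual [eq_comm]
    rw [this]
    simp only [dotProduct, Pi.star_apply]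
    rw [Finset.sum_eq_single a]
    · simp only [if_pos rfl]
      exact star_mul_self_nonneg _
    · intro i _ hi; simp [Ne.symm hi]
    · simp

lemma main_value {α β γ : Type*} [Fintype α] [DecidableEq α] [Fintype β] [DecidableEq β]
    [Fintype γ] [DecidableEq γ] (lam : ℝ) (φ : α → ℝ)
    (Θ : SO β γ) (hΘ : IsChannel Θ) (hDIΘ : IsDI Θ)
    (Φ : SO α β) (hΦ : IsChannel Φ) (hDIΦ : IsDI Φ)
    (ρ : Matrix α α ℂ) (hρ : IsState ρ) :
    traceNorm (deph (Θ (Φ (diffOp lam φ ρ)))) = |lam - (1 - lam)| := by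
  set c : ℝ := lam - (1 - lam) with hc
  set M₀ := Θ (Φ ρ) with hM₀
  have hM₀psd : M₀.PosSemidef := channel_psd Θ hΘ.1 (channel_psd Φ hΦ.1 hρ.1)
  have hM₀tr : M₀.trace = 1 := by rw [hM₀, hΘ.2, hΦ.2, hρ.2]
  have key : deph (Θ (Φ (diffOp lam φ ρ)))
      = Matrix.diagonal (fun i => ((c * (M₀ i i).re : ℝ) : ℂ)) := by
    rw [di_comp hDIΘ hDIΦ (diffOp lam φ ρ), deph_diffOp, _root_.map_smul, _root_.map_smul,
      _root_.map_smul, ← di_comp hDIΘ hDIΦ ρ, deph_apply']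
    ext i j
    by_cases h : i = j
    · subst h
      rw [Matrix.smul_apply, Matrix.diagonal_apply_eq, Matrix.diagonal_apply_eq, smul_eq_mul]
      have h1 : Θ (Φ ρ) i i = (((M₀ i i).re : ℝ) : ℂ) := by
        rw [← hM₀]; exact (psd_diag hM₀psd i).1
      rw [h1, ← hc]
      push_cast
      ring
    · rw [Matrix.smul_apply, Matrix.diagonal_apply_ne _ h, Matrix.diagonal_apply_ne _ h,
        smul_zero]
  rw [key]
  have hTN : traceNorm (Matrix.diagonal (fun i => ((c * (M₀ i i).re : ℝ) : ℂ)))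
      = ∑ i, |c * (M₀ i i).re| := traceNorm_aux _
  rw [hTN]
  have hsum : ∑ i, (M₀ i i).re = 1 := by
    have := congrArg Complex.re hM₀tr
    rw [Matrix.trace] at this
    simpa [Matrix.diag] using this
  calc ∑ i, |c * (M₀ i i).re| = ∑ i, |c| * (M₀ i i).re := by
        refine Finset.sum_congr rfl fun i _ => ?_
        rw [abs_mul, _root_.abs_of_nonneg (psd_diag hM₀psd i).2]
    _ = |c| * ∑ i, (M₀ i i).re := by rw [Finset.mul_sum]
    _ = |c| := by rw [hsum, mul_one]

end Aux

/-- nullity of the pre-processed improvement on detection incoherent channels. -/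
theorem Mpre_nullity {α β γ : Type*} [Fintype α] [DecidableEq α] [Nonempty α]
    [Fintype β] [DecidableEq β] [Nonempty β] [Fintype γ] [DecidableEq γ] [Nonempty γ]
    (lam : ℝ) (hlam : lam ∈ Set.Icc (0 : ℝ) 1) (φ : α → ℝ)
    (Θ : SO β γ) (hΘ : IsChannel Θ) (hDI : IsDI Θ) :
    Mpre lam φ Θ = 0 := by
  
  have hset : {x : ℝ | ∃ (Φ : SO α β) (ρ : Matrix α α ℂ), IsChannel Φ ∧ IsDI Φ ∧ IsState ρ ∧
      x = traceNorm (deph (Θ (Φ (diffOp lam φ ρ))))} = {|lam - (1 - lam)|} := by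
    ext x
    simp only [Set.mem_setOf_eq, Set.mem_singleton_iff]
    constructor
    · rintro ⟨Φ, ρ, hΦ, hDIΦ, hρ, rfl⟩
      exact main_value lam φ Θ hΘ hDI Φ hΦ hDIΦ ρ hρ
    · rintro rfl
      exact ⟨trCh (Classical.arbitrary β),
        Matrix.single (Classical.arbitrary α) (Classical.arbitrary α) 1,
        trCh_channel _, trCh_isDI _, stdBasis_state _,
        (main_value lam φ Θ hΘ hDI _ (trCh_channel _) (trCh_isDI _) _ (stdBasis_state _)).symm⟩
  rw [Mpre, hset, csSup_singleton, sub_self]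
end

section
/- Auxiliary systems do not increase the pre-processed improvements: if Λ_{φ̃(AZ)} := Λ_φ^A ⊗ id^Z, then M_{λ,φ̃(AZ)}(Θ) = M_{λ,φ}(Θ) for all channels Θ, all λ ∈ [0,1], all phase vectors φ, and all auxiliary systems Z. -/
open Matrix Complex
open scoped ComplexOrder

lemma cabs_ofReal (r : ℝ) : ‖(r : ℂ)‖ = |r| := by simp

section HelperOrder
open scoped MatrixOrder

theorem Matrix.posSemidef_iff_eq_transpose_mul_self {n : Type*} [Fintype n] [DecidableEq n]
    {A : Matrix n n ℂ} : A.PosSemidef ↔ ∃ B : Matrix n n ℂ, A = Bᴴ * B := by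
  constructor
  · intro hA
    obtain ⟨B, hB⟩ := CStarAlgebra.nonneg_iff_eq_star_mul_self.mp hA.nonneg
    exact ⟨B, hB⟩
  · rintro ⟨B, rfl⟩
    exact Matrix.posSemidef_conjTranspose_mul_self B

end HelperOrder

theorem Matrix.IsHermitian.spectral_theorem_old {n : Type*} [Fintype n] [DecidableEq n]
    {A : Matrix n n ℂ} (hA : A.IsHermitian) :
    A = (hA.eigenvectorUnitary : Matrix n n ℂ) * Matrix.diagonal (RCLike.ofReal ∘ hA.eigenvalues)
      * star (hA.eigenvectorUnitary : Matrix n n ℂ) := by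
  conv_lhs => rw [hA.spectral_theorem]
  simp

theorem Matrix.IsHermitian.star_mul_self_mul_eq_diagonal_old {n : Type*} [Fintype n]
    [DecidableEq n] {A : Matrix n n ℂ} (hA : A.IsHermitian) :
    star (hA.eigenvectorUnitary : Matrix n n ℂ) * A * (hA.eigenvectorUnitary : Matrix n n ℂ)
      = Matrix.diagonal (RCLike.ofReal ∘ hA.eigenvalues) := by
  have := hA.conjStarAlgAut_star_eigenvectorUnitary
  rw [Unitary.conjStarAlgAut_star_apply] at this
  exact this

section Basic

open Finset

variable {ι κ τ : Type*} [Fintype ι] [DecidableEq ι] [Fintype κ] [DecidableEq κ]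
  [Fintype τ] [DecidableEq τ]

lemma so_apply_eq (Θ : SO ι κ) (X : Matrix ι ι ℂ) :
    Θ X = ∑ i, ∑ j, X i j • Θ (Matrix.single i j 1) := by
  conv_lhs => rw [Matrix.matrix_eq_sum_single X]
  rw [map_sum]
  refine Finset.sum_congr rfl fun i _ => ?_
  rw [map_sum]
  refine Finset.sum_congr rfl fun j _ => ?_
  rw [← _root_.map_smul, Matrix.smul_single, smul_eq_mul, mul_one]

lemma so_apply_entry (Θ : SO ι κ) (X : Matrix ι ι ℂ) (p q : κ) :
    Θ X p q = ∑ i, ∑ j, choi Θ (p, i) (q, j) * X i j := by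
  conv_lhs => rw [so_apply_eq Θ X]
  rw [Matrix.sum_apply]
  refine Finset.sum_congr rfl fun i _ => ?_
  rw [Matrix.sum_apply]
  refine Finset.sum_congr rfl fun j _ => ?_
  simp [choi, mul_comm]

lemma choi_comp (Θ : SO κ τ) (Φ : SO ι κ) (p : τ) (i : ι) (q : τ) (j : ι) :
    choi (Θ ∘ₗ Φ) (p, i) (q, j)
      = ∑ k, ∑ l, choi Φ (k, i) (l, j) * choi Θ (p, k) (q, l) := by
  simp only [choi, Matrix.of_apply, LinearMap.comp_apply]
  rw [so_apply_entry Θ _ p q]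
  refine Finset.sum_congr rfl fun k _ => Finset.sum_congr rfl fun l _ => ?_
  rw [mul_comm]
  rfl

end Basic
section Gram

open Finset

set_option linter.unusedSectionVars false
variable {m n : Type*} [Fintype m] [Fintype n]

lemma gram_entry (B : Matrix m n ℂ) (a b : n) :
    (Bᴴ * B) a b = ∑ k, (starRingEnd ℂ) (B k a) * B k b := by
  simp [Matrix.mul_apply, Matrix.conjTranspose_apply]

lemma gram_diag (B : Matrix m n ℂ) (a : n) :
    (Bᴴ * B) a a = ((∑ k, ‖B k a‖ ^ 2 : ℝ) : ℂ) := by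
  rw [gram_entry]
  push_cast
  refine Finset.sum_congr rfl fun k _ => ?_
  rw [mul_comm, Complex.mul_conj']

lemma gram_offdiag_le (B : Matrix m n ℂ) (a b : n) :
    ‖(Bᴴ * B) a b‖
      ≤ Real.sqrt (∑ k, ‖B k a‖ ^ 2) * Real.sqrt (∑ k, ‖B k b‖ ^ 2) := by
  rw [gram_entry]
  calc ‖∑ k, (starRingEnd ℂ) (B k a) * B k b‖
      ≤ ∑ k, ‖(starRingEnd ℂ) (B k a) * B k b‖ := by
        exact norm_sum_le _ _
    _ = ∑ k, ‖B k a‖ * ‖B k b‖ := by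
        refine Finset.sum_congr rfl fun k _ => ?_
        rw [norm_mul, Complex.norm_conj]
    _ ≤ _ := Real.sum_mul_le_sqrt_mul_sqrt _ _ _

/-- entries of a PSD matrix with all diagonal entries at most 1 (in ℝ-cast) are ≤ 1 in abs. -/
lemma psd_entry_abs_le {A : Matrix n n ℂ} [DecidableEq n] (hA : A.PosSemidef)
    (hdiag : ∀ i, ‖A i i‖ ≤ 1) (a b : n) : ‖A a b‖ ≤ 1 := by
  obtain ⟨B, rfl⟩ := Matrix.posSemidef_iff_eq_transpose_mul_self.mp hA
  have h1 : ∀ i, ∑ k, ‖B k i‖ ^ 2 ≤ 1 := by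
    intro i
    have h0 : (0:ℝ) ≤ ∑ k, ‖B k i‖ ^ 2 :=
      Finset.sum_nonneg fun k _ => sq_nonneg _
    have := hdiag i
    rw [gram_diag] at this
    calc ∑ k, ‖B k i‖ ^ 2 = |∑ k, ‖B k i‖ ^ 2| := (_root_.abs_of_nonneg h0).symm
      _ = ‖((∑ k, ‖B k i‖ ^ 2 : ℝ) : ℂ)‖ := (cabs_ofReal _).symm
      _ ≤ 1 := this
  calc ‖(Bᴴ * B) a b‖ ≤ _ := gram_offdiag_le B a b
    _ ≤ 1 * 1 := by
        gcongr
        · exact Real.sqrt_le_one.mpr (h1 a)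
        · exact Real.sqrt_le_one.mpr (h1 b)
    _ = 1 := one_mul 1

end Gram
section Comp

open Finset

variable {ι κ τ : Type*} [Fintype ι] [DecidableEq ι] [Fintype κ] [DecidableEq κ]
  [Fintype τ] [DecidableEq τ]

lemma IsChannel.comp {Θ : SO κ τ} {Φ : SO ι κ} (hΘ : IsChannel Θ) (hΦ : IsChannel Φ) :
    IsChannel (Θ ∘ₗ Φ) := by
  obtain ⟨B, hB⟩ := Matrix.posSemidef_iff_eq_transpose_mul_self.mp hΦ.1
  obtain ⟨C, hC⟩ := Matrix.posSemidef_iff_eq_transpose_mul_self.mp hΘ.1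
  constructor
  · set D : Matrix ((κ × ι) × (τ × κ)) (τ × ι) ℂ :=
      Matrix.of fun mn pi => ∑ k, C mn.2 (pi.1, k) * B mn.1 (k, pi.2) with hD
    have : choi (Θ ∘ₗ Φ) = Dᴴ * D := by
      ext ⟨p, i⟩ ⟨q, j⟩
      have expand : ∀ k l, choi Φ (k, i) (l, j) = ∑ m, (starRingEnd ℂ) (B m (k, i)) * B m (l, j) :=
        fun k l => by rw [hB, gram_entry]
      have expandC : ∀ k l, choi Θ (p, k) (q, l)
          = ∑ n, (starRingEnd ℂ) (C n (p, k)) * C n (q, l) :=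
        fun k l => by rw [hC, gram_entry]
      calc choi (Θ ∘ₗ Φ) (p, i) (q, j)
          = ∑ kl : κ × κ, ∑ mn : (κ × ι) × (τ × κ),
              ((starRingEnd ℂ) (B mn.1 (kl.1, i)) * B mn.1 (kl.2, j)) *
              ((starRingEnd ℂ) (C mn.2 (p, kl.1)) * C mn.2 (q, kl.2)) := by
            rw [choi_comp, Fintype.sum_prod_type]
            refine Finset.sum_congr rfl fun k _ => Finset.sum_congr rfl fun l _ => ?_
            rw [expand k l, expandC k l, Finset.sum_mul_sum]
            conv_rhs => rw [Fintype.sum_prod_type]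
        _ = ∑ mn : (κ × ι) × (τ × κ), ∑ kl : κ × κ,
              ((starRingEnd ℂ) (B mn.1 (kl.1, i)) * B mn.1 (kl.2, j)) *
              ((starRingEnd ℂ) (C mn.2 (p, kl.1)) * C mn.2 (q, kl.2)) := Finset.sum_comm
        _ = (Dᴴ * D) (p, i) (q, j) := by
            rw [gram_entry]
            refine Finset.sum_congr rfl fun mn _ => ?_
            simp only [hD, Matrix.of_apply, map_sum]
            rw [Finset.sum_mul_sum]
            conv_lhs => rw [Fintype.sum_prod_type]
            refine Finset.sum_congr rfl fun k _ => Finset.sum_congr rfl fun l _ => ?_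
            simp only [_root_.map_mul]
            ring
    rw [this]
    exact Matrix.posSemidef_conjTranspose_mul_self D
  · intro ρ
    rw [LinearMap.comp_apply, hΘ.2, hΦ.2]

end Comp
section TraceNorm

open Finset

variable {n : Type*} [Fintype n] [DecidableEq n]

lemma sum_mul_sqrt_le (w e : n → ℝ) (hw : ∀ j, 0 ≤ w j) (hsum : ∑ j, w j = 1)
    (he : ∀ j, 0 ≤ e j) :
    ∑ j, w j * Real.sqrt (e j) ≤ Real.sqrt (∑ j, w j * e j) := by
  calc ∑ j, w j * Real.sqrt (e j) = ∑ j, Real.sqrt (w j) * Real.sqrt (w j * e j) := by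
        refine Finset.sum_congr rfl fun j _ => ?_
        rw [Real.sqrt_mul (hw j), ← mul_assoc, Real.mul_self_sqrt (hw j)]
    _ ≤ Real.sqrt (∑ j, w j) * Real.sqrt (∑ j, w j * e j) :=
        Real.sum_sqrt_mul_sqrt_le _ hw (fun j => mul_nonneg (hw j) (he j))
    _ = Real.sqrt (∑ j, w j * e j) := by rw [hsum, Real.sqrt_one, one_mul]

/-- one direction of the doubly-stochastic majorization argument -/
lemma sum_sqrt_le_sum_sqrt (w : n → n → ℝ) (e c : n → ℝ)
    (hw : ∀ i j, 0 ≤ w i j) (hrow : ∀ i, ∑ j, w i j = 1) (hcol : ∀ j, ∑ i, w i j = 1)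
    (he : ∀ j, 0 ≤ e j) (hce : ∀ i, c i = ∑ j, w i j * e j) :
    ∑ j, Real.sqrt (e j) ≤ ∑ i, Real.sqrt (c i) := by
  calc ∑ j, Real.sqrt (e j) = ∑ j, (∑ i, w i j) * Real.sqrt (e j) := by
        refine Finset.sum_congr rfl fun j _ => ?_; rw [hcol j, one_mul]
    _ = ∑ i, ∑ j, w i j * Real.sqrt (e j) := by
        rw [Finset.sum_comm]
        exact Finset.sum_congr rfl fun j _ => by rw [Finset.sum_mul]
    _ ≤ ∑ i, Real.sqrt (c i) := by
        refine Finset.sum_le_sum fun i _ => ?_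
        rw [hce i]
        exact sum_mul_sqrt_le _ _ (hw i) (hrow i) he

lemma traceNorm_diagonal_eq (d : n → ℂ) :
    traceNorm (Matrix.diagonal d) = ∑ i, ‖d i‖ := by
  set M := Matrix.diagonal d with hM
  have hH := Matrix.isHermitian_conjTranspose_mul_self M
  set U : Matrix n n ℂ := (Matrix.IsHermitian.eigenvectorUnitary hH : Matrix n n ℂ) with hU
  set e := hH.eigenvalues with he
  set c : n → ℝ := fun i => ‖d i‖ ^ 2 with hc
  have hMHM : Mᴴ * M = Matrix.diagonal fun i => (c i : ℂ) := by
    ext i j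
    simp only [hM, Matrix.diagonal_conjTranspose, Matrix.diagonal_mul_diagonal,
      Matrix.diagonal_apply]
    by_cases h : i = j
    · subst h
      simp only [if_true, Pi.star_apply, RCLike.star_def, hc]
      rw [mul_comm, Complex.mul_conj, Complex.normSq_eq_norm_sq]
    · simp [h]
  set w : n → n → ℝ := fun i j => Complex.normSq (U i j) with hw
  have hw0 : ∀ i j, 0 ≤ w i j := fun i j => Complex.normSq_nonneg _
  have hUU : U * Uᴴ = 1 := by
    have := (Matrix.mem_unitaryGroup_iff).mp (Matrix.IsHermitian.eigenvectorUnitary hH).2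
    simpa [Matrix.star_eq_conjTranspose] using this
  have hUU' : Uᴴ * U = 1 := by
    have := (Matrix.mem_unitaryGroup_iff').mp (Matrix.IsHermitian.eigenvectorUnitary hH).2
    simpa [Matrix.star_eq_conjTranspose] using this
  have hrow : ∀ i, ∑ j, w i j = 1 := by
    intro i
    have h1 : (U * Uᴴ) i i = 1 := by rw [hUU]; simp
    rw [Matrix.mul_apply] at h1
    have : ∑ j, ((w i j : ℝ) : ℂ) = 1 := by
      rw [← h1]
      refine Finset.sum_congr rfl fun j _ => ?_
      rw [Matrix.conjTranspose_apply, Complex.star_def]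
      exact (Complex.mul_conj _).symm
    exact_mod_cast this
  have hcol : ∀ j, ∑ i, w i j = 1 := by
    intro j
    have h1 : (Uᴴ * U) j j = 1 := by rw [hUU']; simp
    rw [Matrix.mul_apply] at h1
    have : ∑ i, ((w i j : ℝ) : ℂ) = 1 := by
      rw [← h1]
      refine Finset.sum_congr rfl fun i _ => ?_
      rw [Matrix.conjTranspose_apply, Complex.star_def, mul_comm]
      exact (Complex.mul_conj _).symm
    exact_mod_cast this
  have he0 : ∀ j, 0 ≤ e j := fun j =>
    (Matrix.posSemidef_conjTranspose_mul_self M).eigenvalues_nonneg j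
  have hc0 : ∀ i, 0 ≤ c i := fun i => sq_nonneg _
  -- c i = ∑ j, w i j * e j
  have hce : ∀ i, c i = ∑ j, w i j * e j := by
    intro i
    have hspec := hH.spectral_theorem_old
    have h1 : (Mᴴ * M) i i = ∑ j, ((w i j * e j : ℝ) : ℂ) := by
      conv_lhs => rw [hspec]
      rw [Matrix.mul_apply]
      refine Finset.sum_congr rfl fun j _ => ?_
      rw [Matrix.mul_diagonal, Matrix.star_apply, Complex.star_def]
      simp only [hw, Function.comp_apply]
      rw [show (RCLike.ofReal (e j) : ℂ) = ((e j : ℝ) : ℂ) from rfl]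
      push_cast
      rw [← Complex.mul_conj]
      ring
    rw [hMHM] at h1
    simp only [Matrix.diagonal_apply_eq] at h1
    exact_mod_cast h1
  -- e j = ∑ i, w i j * c i
  have hec : ∀ j, e j = ∑ i, w i j * c i := by
    intro j
    have hdiag := hH.star_mul_self_mul_eq_diagonal_old
    have h1 : (Matrix.diagonal (RCLike.ofReal ∘ e) : Matrix n n ℂ) j j
        = ∑ i, ((w i j * c i : ℝ) : ℂ) := by
      have hent : ∀ a b, (Mᴴ * M) a b = if a = b then (c a : ℂ) else 0 := fun a b => by
        rw [hMHM, Matrix.diagonal_apply]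
      rw [← hdiag, Matrix.mul_apply]
      refine Finset.sum_congr rfl fun i _ => ?_
      have h2 : (star U * (Mᴴ * M)) j i = (star U) j i * (c i : ℂ) := by
        rw [Matrix.mul_apply, Finset.sum_eq_single i]
        · rw [hent i i, if_pos rfl]
        · intro b _ hb
          rw [hent b i, if_neg hb, mul_zero]
        · intro h; exact absurd (Finset.mem_univ i) h
      rw [h2, Matrix.star_apply, Complex.star_def]
      simp only [hw]
      push_cast
      rw [← Complex.mul_conj]
      ring
    simp only [Matrix.diagonal_apply_eq, Function.comp_apply] at h1
    rw [show (RCLike.ofReal (e j) : ℂ) = ((e j : ℝ) : ℂ) from rfl] at h1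
    exact_mod_cast h1
  have key : ∑ i, Real.sqrt (e i) = ∑ i, Real.sqrt (c i) := by
    refine le_antisymm ?_ ?_
    · exact sum_sqrt_le_sum_sqrt w e c hw0 hrow hcol he0 hce
    · exact sum_sqrt_le_sum_sqrt (fun i j => w j i) c e (fun i j => hw0 j i)
        (fun i => hcol i) (fun j => hrow j) hc0 hec
  calc traceNorm M = ∑ i, Real.sqrt (e i) := rfl
    _ = ∑ i, Real.sqrt (c i) := key
    _ = ∑ i, ‖d i‖ := by
        refine Finset.sum_congr rfl fun i _ => ?_
        rw [hc]
        exact Real.sqrt_sq (norm_nonneg _)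

lemma deph_eq_diagonal (M : Matrix n n ℂ) :
    deph M = Matrix.diagonal (fun i => M i i) := by
  ext i j
  by_cases h : i = j <;> simp [deph, Matrix.diagonal_apply, h]

lemma traceNorm_deph (M : Matrix n n ℂ) :
    traceNorm (deph M) = ∑ i, ‖M i i‖ := by
  rw [deph_eq_diagonal, traceNorm_diagonal_eq]

end TraceNorm
set_option linter.unusedSectionVars false

section Bounds

open Finset

variable {ι κ : Type*} [Fintype ι] [DecidableEq ι] [Fintype κ] [DecidableEq κ]

lemma trace_stdBasisMatrix (i : ι) : Matrix.trace (Matrix.single i i (1 : ℂ)) = 1 := by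
  simp [Matrix.trace, Matrix.diag, Matrix.single]

lemma isState_entry_abs_le {ρ : Matrix ι ι ℂ} (h : IsState ρ) (i j : ι) :
    ‖ρ i j‖ ≤ 1 := by
  obtain ⟨hpsd, htr⟩ := h
  obtain ⟨B, rfl⟩ := Matrix.posSemidef_iff_eq_transpose_mul_self.mp hpsd
  set s : ι → ℝ := fun i => ∑ k, ‖B k i‖ ^ 2 with hs
  have hs0 : ∀ i, 0 ≤ s i := fun i => Finset.sum_nonneg fun k _ => sq_nonneg _
  have hsum : ∑ i, s i = 1 := by
    have h1 : Matrix.trace (Bᴴ * B) = ((∑ i, s i : ℝ) : ℂ) := by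
      rw [Matrix.trace]
      push_cast
      exact Finset.sum_congr rfl fun i _ => gram_diag B i
    rw [htr] at h1
    exact_mod_cast h1.symm
  have hle : ∀ i, s i ≤ 1 := by
    intro i
    rw [← hsum]
    exact Finset.single_le_sum (fun i _ => hs0 i) (Finset.mem_univ i)
  refine psd_entry_abs_le (Matrix.posSemidef_conjTranspose_mul_self B) (fun i => ?_) i j
  rw [gram_diag, cabs_ofReal, _root_.abs_of_nonneg (hs0 i)]
  exact hle i

lemma choi_entry_abs_le {Θ : SO ι κ} (h : IsChannel Θ) (p : κ) (i : ι) (q : κ) (j : ι) :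
    ‖choi Θ (p, i) (q, j)‖ ≤ 1 := by
  obtain ⟨hpsd, htr⟩ := h
  obtain ⟨B, hB⟩ := Matrix.posSemidef_iff_eq_transpose_mul_self.mp hpsd
  have hdiag : ∀ x : κ × ι, choi Θ x x = ((∑ k, ‖B k x‖ ^ 2 : ℝ) : ℂ) := by
    intro x; rw [hB]; exact gram_diag B x
  have hsum : ∀ i0 : ι, ∑ p0 : κ, (∑ k, ‖B k (p0, i0)‖ ^ 2) = 1 := by
    intro i0
    have h1 : Matrix.trace (Θ (Matrix.single i0 i0 1)) = 1 := by
      rw [htr, trace_stdBasisMatrix]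
    have h2 : Matrix.trace (Θ (Matrix.single i0 i0 1))
        = ∑ p0 : κ, choi Θ (p0, i0) (p0, i0) := by
      rw [Matrix.trace]
      exact Finset.sum_congr rfl fun p0 _ => rfl
    rw [h2] at h1
    have h3 : ((∑ p0 : κ, ∑ k, ‖B k (p0, i0)‖ ^ 2 : ℝ) : ℂ) = 1 := by
      rw [← h1]
      rw [Complex.ofReal_sum]
      exact Finset.sum_congr rfl fun p0 _ => (hdiag (p0, i0)).symm
    exact_mod_cast h3
  have hd1 : ∀ x : κ × ι, ‖choi Θ x x‖ ≤ 1 := by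
    rintro ⟨p0, i0⟩
    rw [hdiag, cabs_ofReal,
      _root_.abs_of_nonneg (Finset.sum_nonneg fun k _ => sq_nonneg _)]
    rw [← hsum i0]
    exact Finset.single_le_sum (f := fun p1 => ∑ k, ‖B k (p1, i0)‖ ^ 2)
      (fun x _ => Finset.sum_nonneg fun k _ => sq_nonneg _) (Finset.mem_univ p0)
  exact psd_entry_abs_le hpsd hd1 _ _

lemma channel_apply_entry_le {Θ : SO ι κ} (h : IsChannel Θ) {X : Matrix ι ι ℂ} {c : ℝ}
    (hc : 0 ≤ c) (hX : ∀ i j, ‖X i j‖ ≤ c) (p q : κ) :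
    ‖Θ X p q‖ ≤ (Fintype.card ι : ℝ) ^ 2 * c := by
  rw [so_apply_entry]
  calc ‖∑ i, ∑ j, choi Θ (p, i) (q, j) * X i j‖
      ≤ ∑ i, ∑ j, ‖choi Θ (p, i) (q, j) * X i j‖ := by
        refine (norm_sum_le _ _).trans (Finset.sum_le_sum fun i _ => ?_)
        exact norm_sum_le _ _
    _ ≤ ∑ _i : ι, ∑ _j : ι, c := by
        refine Finset.sum_le_sum fun i _ => Finset.sum_le_sum fun j _ => ?_
        rw [norm_mul]
        calc ‖choi Θ (p, i) (q, j)‖ * ‖X i j‖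
            ≤ 1 * c := by
              apply mul_le_mul (choi_entry_abs_le h p i q j) (hX i j)
                (norm_nonneg _) zero_le_one
          _ = c := one_mul c
    _ = (Fintype.card ι : ℝ) ^ 2 * c := by
        simp [Finset.sum_const, Finset.card_univ]
        ring

lemma diffOp_apply {lam : ℝ} (φ : ι → ℝ) (ρ : Matrix ι ι ℂ) (i j : ι) :
    diffOp lam φ ρ i j = (lam : ℂ) * ρ i j
      - ((1 - lam : ℝ) : ℂ) * (Complex.exp (Complex.I * ((φ i : ℂ) - (φ j : ℂ))) * ρ i j) := by
  simp [diffOp, phaseCh, Matrix.sub_apply]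

lemma abs_exp_phase (a b : ℝ) :
    ‖Complex.exp (Complex.I * ((a : ℂ) - (b : ℂ)))‖ = 1 := by
  rw [Complex.norm_exp]
  have : (Complex.I * ((a : ℂ) - (b : ℂ))).re = 0 := by simp
  rw [this, Real.exp_zero]

lemma diffOp_entry_abs_le {lam : ℝ} (hlam : lam ∈ Set.Icc (0 : ℝ) 1) (φ : ι → ℝ)
    {ρ : Matrix ι ι ℂ} (hρ : ∀ i j, ‖ρ i j‖ ≤ 1) (i j : ι) :
    ‖diffOp lam φ ρ i j‖ ≤ 1 := by
  obtain ⟨h0, h1⟩ := hlam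
  rw [diffOp_apply]
  calc ‖_‖ ≤ ‖(lam : ℂ) * ρ i j‖
        + ‖((1 - lam : ℝ) : ℂ) * (Complex.exp (Complex.I * ((φ i : ℂ) - (φ j : ℂ))) * ρ i j)‖ :=
      norm_sub_le _ _
    _ = lam * ‖ρ i j‖ + (1 - lam) * ‖ρ i j‖ := by
      rw [norm_mul, norm_mul, norm_mul, abs_exp_phase, one_mul,
        cabs_ofReal, cabs_ofReal, _root_.abs_of_nonneg h0, _root_.abs_of_nonneg (by linarith)]
    _ = ‖ρ i j‖ := by ring
    _ ≤ 1 := hρ i j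

end Bounds
section Constructions

open Finset

variable {α ζ : Type*} [Fintype α] [DecidableEq α] [Fintype ζ] [DecidableEq ζ]

lemma IsDI.comp' {ι κ τ : Type*} [Fintype ι] [DecidableEq ι] [Fintype κ] [DecidableEq κ]
    [Fintype τ] [DecidableEq τ] {E : SO ι κ} {Φ : SO κ τ}
    (hΦ : IsDI Φ) (hE : IsDI E) : IsDI (Φ ∘ₗ E) := by
  have hΦ' : ∀ X, deph (Φ X) = deph (Φ (deph X)) := fun X => DFunLike.congr_fun hΦ X
  have hE' : ∀ X, deph (E X) = deph (E (deph X)) := fun X => DFunLike.congr_fun hE X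
  apply LinearMap.ext
  intro σ
  simp only [LinearMap.comp_apply]
  rw [hΦ' (E σ), hE' σ, ← hΦ']

lemma deph_apply {ι : Type*} [Fintype ι] [DecidableEq ι] (M : Matrix ι ι ℂ) (i j : ι) :
    deph M i j = if i = j then M i j else 0 := rfl

/-- partial trace over the second factor -/
noncomputable def ptr : SO (α × ζ) α where
  toFun σ := Matrix.of fun a b => ∑ z, σ (a, z) (b, z)
  map_add' := by
    intro x y; ext a b
    simp [Finset.sum_add_distrib]
  map_smul' := by
    intro c x; ext a b
    simp [Finset.mul_sum]

@[simp] lemma ptr_apply (σ : Matrix (α × ζ) (α × ζ) ℂ) (a b : α) :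
    ptr σ a b = ∑ z, σ (a, z) (b, z) := rfl

lemma ptr_isChannel : IsChannel (ptr : SO (α × ζ) α) := by
  constructor
  · set B : Matrix ζ (α × (α × ζ)) ℂ :=
      Matrix.of fun w x => if x.2.1 = x.1 ∧ x.2.2 = w then 1 else 0 with hBdef
    have : choi (ptr : SO (α × ζ) α) = Bᴴ * B := by
      ext ⟨a, b, z⟩ ⟨a', b', z'⟩
      rw [gram_entry]
      have lhs_eq : choi (ptr : SO (α × ζ) α) (a, (b, z)) (a', (b', z'))
          = ∑ w, (if ((b, z) = (a, w) ∧ (b', z') = (a', w)) then (1 : ℂ) else 0) := by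
        simp only [choi, Matrix.of_apply, ptr_apply]
        refine Finset.sum_congr rfl fun w _ => ?_
        simp [Matrix.single]
      rw [lhs_eq]
      refine Finset.sum_congr rfl fun w _ => ?_
      have hB1 : B w (a, (b, z)) = if b = a ∧ z = w then 1 else 0 := rfl
      have hB2 : B w (a', (b', z')) = if b' = a' ∧ z' = w then 1 else 0 := rfl
      rw [hB1, hB2]
      by_cases h1 : b = a <;> by_cases h2 : z = w <;> by_cases h3 : b' = a' <;>
        by_cases h4 : z' = w <;> simp [Prod.ext_iff, h1, h2, h3, h4]
    rw [this]
    exact Matrix.posSemidef_conjTranspose_mul_self B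
  · intro ρ
    rw [Matrix.trace, Matrix.trace]
    conv_rhs => rw [Fintype.sum_prod_type]
    exact Finset.sum_congr rfl fun a _ => rfl

lemma ptr_isDI : IsDI (ptr : SO (α × ζ) α) := by
  apply LinearMap.ext
  intro σ
  simp only [LinearMap.comp_apply]
  ext a b
  rw [deph_apply, deph_apply]
  by_cases h : a = b
  · subst h
    rw [if_pos rfl, if_pos rfl, ptr_apply, ptr_apply]
    refine Finset.sum_congr rfl fun z _ => ?_
    rw [deph_apply, if_pos rfl]
  · rw [if_neg h, if_neg h]

lemma ptr_diffOp (lam : ℝ) (φ : α → ℝ) (σ : Matrix (α × ζ) (α × ζ) ℂ) :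
    ptr (diffOp lam (fun p : α × ζ => φ p.1) σ) = diffOp lam φ (ptr σ) := by
  ext a b
  rw [ptr_apply, diffOp_apply φ (ptr σ)]
  simp only [ptr_apply]
  calc ∑ z, diffOp lam (fun p : α × ζ => φ p.1) σ (a, z) (b, z)
      = ∑ z, ((lam : ℂ) * σ (a, z) (b, z)
          - ((1 - lam : ℝ) : ℂ) * (Complex.exp (Complex.I * ((φ a : ℂ) - (φ b : ℂ)))
            * σ (a, z) (b, z))) := by
        refine Finset.sum_congr rfl fun z _ => ?_
        exact diffOp_apply _ σ (a, z) (b, z)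
    _ = _ := by
        rw [Finset.sum_sub_distrib, ← Finset.mul_sum, ← Finset.mul_sum, ← Finset.mul_sum]

/-- tensoring with the incoherent pure state `|z0⟩⟨z0|` -/
noncomputable def tensPure (z0 : ζ) (ρ : Matrix α α ℂ) : Matrix (α × ζ) (α × ζ) ℂ :=
  Matrix.of fun p q => ρ p.1 q.1 * ((if p.2 = z0 then 1 else 0) * (if q.2 = z0 then 1 else 0))

lemma tensPure_isState (z0 : ζ) {ρ : Matrix α α ℂ} (h : IsState ρ) :
    IsState (tensPure z0 ρ) := by
  obtain ⟨hpsd, htr⟩ := h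
  obtain ⟨C, hC⟩ := Matrix.posSemidef_iff_eq_transpose_mul_self.mp hpsd
  constructor
  · set B : Matrix α (α × ζ) ℂ :=
      Matrix.of fun m p => C m p.1 * (if p.2 = z0 then 1 else 0) with hBdef
    have : tensPure z0 ρ = Bᴴ * B := by
      ext p q
      rw [gram_entry]
      have hρ : ρ p.1 q.1 = ∑ m, (starRingEnd ℂ) (C m p.1) * C m q.1 := by
        rw [hC, gram_entry]
      show ρ p.1 q.1 * ((if p.2 = z0 then 1 else 0) * (if q.2 = z0 then 1 else 0)) = _
      rw [hρ, Finset.sum_mul]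
      refine Finset.sum_congr rfl fun m _ => ?_
      have hB1 : B m (p.1, p.2) = C m p.1 * (if p.2 = z0 then 1 else 0) := rfl
      have hB2 : B m (q.1, q.2) = C m q.1 * (if q.2 = z0 then 1 else 0) := rfl
      rw [show (p.1, p.2) = p from rfl] at hB1
      rw [show (q.1, q.2) = q from rfl] at hB2
      rw [hB1, hB2, _root_.map_mul]
      rw [show (starRingEnd ℂ) (if p.2 = z0 then 1 else (0:ℂ))
          = if p.2 = z0 then 1 else (0:ℂ) by split_ifs <;> simp]
      ring
    rw [this]
    exact Matrix.posSemidef_conjTranspose_mul_self B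
  · rw [← htr, Matrix.trace, Matrix.trace]
    conv_lhs => rw [Fintype.sum_prod_type]
    refine Finset.sum_congr rfl fun a _ => ?_
    show ∑ z, tensPure z0 ρ (a, z) (a, z) = ρ a a
    simp [tensPure, Finset.sum_ite_eq', mul_ite]

lemma ptr_tensPure (z0 : ζ) (ρ : Matrix α α ℂ) : ptr (tensPure z0 ρ) = ρ := by
  ext a b
  rw [ptr_apply]
  show (∑ z, ρ a b * ((if z = z0 then 1 else 0) * (if z = z0 then 1 else 0))) = ρ a b
  simp [Finset.sum_ite_eq', mul_ite]

end Constructions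
section Emb

open Finset

variable {α ζ : Type*} [Fintype α] [DecidableEq α] [Fintype ζ] [DecidableEq ζ]

noncomputable def embCh (u : α → ζ → ℂ) : SO α (α × ζ) where
  toFun σ := Matrix.of fun p q => σ p.1 q.1 * (u p.1 p.2 * (starRingEnd ℂ) (u q.1 q.2))
  map_add' := by
    intro x y; ext p q
    simp only [Matrix.of_apply, Matrix.add_apply]
    ring
  map_smul' := by
    intro c x; ext p q
    simp only [Matrix.of_apply, Matrix.smul_apply, smul_eq_mul, RingHom.id_apply]
    ring

@[simp] lemma embCh_apply (u : α → ζ → ℂ) (σ : Matrix α α ℂ) (p q : α × ζ) :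
    embCh u σ p q = σ p.1 q.1 * (u p.1 p.2 * (starRingEnd ℂ) (u q.1 q.2)) := rfl

lemma embCh_isChannel (u : α → ζ → ℂ) (hu : ∀ a, ∑ z, Complex.normSq (u a z) = 1) :
    IsChannel (embCh u) := by
  constructor
  · set B : Matrix Unit ((α × ζ) × α) ℂ :=
      Matrix.of fun _ x => (if x.1.1 = x.2 then 1 else 0) * (starRingEnd ℂ) (u x.1.1 x.1.2)
      with hBdef
    have : choi (embCh u) = Bᴴ * B := by
      ext ⟨p, a⟩ ⟨q, b⟩
      rw [gram_entry]
      rw [Finset.sum_eq_single ()]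
      rotate_left
      · intro b' _ hb'; exact absurd rfl hb'
      · intro h; exact absurd (Finset.mem_univ ()) h
      have hB1 : B () (p, a) = (if p.1 = a then 1 else 0) * (starRingEnd ℂ) (u p.1 p.2) := rfl
      have hB2 : B () (q, b) = (if q.1 = b then 1 else 0) * (starRingEnd ℂ) (u q.1 q.2) := rfl
      rw [hB1, hB2]
      show embCh u (Matrix.single a b 1) p q = _
      rw [embCh_apply]
      have hstd : Matrix.single a b (1 : ℂ) p.1 q.1
          = if a = p.1 ∧ b = q.1 then 1 else 0 := rfl
      rw [hstd, _root_.map_mul]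
      rw [show (starRingEnd ℂ) (if p.1 = a then 1 else (0:ℂ))
          = if p.1 = a then 1 else (0:ℂ) by split_ifs <;> simp]
      rw [Complex.conj_conj]
      by_cases h1 : a = p.1 <;> by_cases h2 : b = q.1 <;>
        simp [h1, h2, eq_comm] <;> ring
    rw [this]
    exact Matrix.posSemidef_conjTranspose_mul_self B
  · intro ρ
    rw [Matrix.trace, Matrix.trace]
    conv_lhs => rw [Fintype.sum_prod_type]
    refine Finset.sum_congr rfl fun a _ => ?_
    show ∑ z, ρ a a * (u a z * (starRingEnd ℂ) (u a z)) = ρ a a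
    calc ∑ z, ρ a a * (u a z * (starRingEnd ℂ) (u a z))
        = ρ a a * ((∑ z, Complex.normSq (u a z) : ℝ) : ℂ) := by
          rw [Complex.ofReal_sum, ← Finset.mul_sum]
          congr 1
          exact Finset.sum_congr rfl fun z _ => Complex.mul_conj _
      _ = ρ a a := by rw [hu a, Complex.ofReal_one, mul_one]

lemma embCh_isDI (u : α → ζ → ℂ) : IsDI (embCh u) := by
  apply LinearMap.ext
  intro σ
  simp only [LinearMap.comp_apply]
  ext p q
  rw [deph_apply, deph_apply]
  by_cases h : p = q
  · subst h
    rw [if_pos rfl, if_pos rfl, embCh_apply, embCh_apply, deph_apply, if_pos rfl]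
  · rw [if_neg h, if_neg h]

lemma embCh_diffOp (u : α → ζ → ℂ) (lam : ℝ) (φ : α → ℝ) (σ : Matrix α α ℂ) :
    embCh u (diffOp lam φ σ) = diffOp lam (fun p : α × ζ => φ p.1) (embCh u σ) := by
  ext p q
  rw [embCh_apply, diffOp_apply, diffOp_apply]
  simp only [embCh_apply]
  ring

noncomputable def colNormSq (ψ : α × ζ → ℂ) (a : α) : ℝ := ∑ z, Complex.normSq (ψ (a, z))

noncomputable def colNorm (ψ : α × ζ → ℂ) (a : α) : ℝ := Real.sqrt (colNormSq ψ a)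

noncomputable def colU (z0 : ζ) (ψ : α × ζ → ℂ) (a : α) (z : ζ) : ℂ :=
  if colNormSq ψ a = 0 then (if z = z0 then 1 else 0)
  else ψ (a, z) / (colNorm ψ a : ℂ)

noncomputable def colState (ψ : α × ζ → ℂ) : Matrix α α ℂ :=
  Matrix.of fun a b => ((colNorm ψ a * colNorm ψ b : ℝ) : ℂ)

lemma colNormSq_nonneg (ψ : α × ζ → ℂ) (a : α) : 0 ≤ colNormSq ψ a :=
  Finset.sum_nonneg fun z _ => Complex.normSq_nonneg _

lemma colU_unit (z0 : ζ) (ψ : α × ζ → ℂ) (a : α) :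
    ∑ z, Complex.normSq (colU z0 ψ a z) = 1 := by
  by_cases h : colNormSq ψ a = 0
  · have : ∀ z, Complex.normSq (colU z0 ψ a z) = if z = z0 then 1 else 0 := by
      intro z
      rw [colU, if_pos h]
      split_ifs <;> simp
    rw [Finset.sum_congr rfl fun z _ => this z, Finset.sum_ite_eq' Finset.univ z0 (fun _ => (1:ℝ))]
    simp
  · have hpos : 0 < colNormSq ψ a := lt_of_le_of_ne (colNormSq_nonneg ψ a) (Ne.symm h)
    have : ∀ z, Complex.normSq (colU z0 ψ a z) = Complex.normSq (ψ (a, z)) / colNormSq ψ a := by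
      intro z
      rw [colU, if_neg h, Complex.normSq_div]
      congr 1
      rw [Complex.normSq_ofReal, colNorm, Real.mul_self_sqrt (colNormSq_nonneg ψ a)]
    rw [Finset.sum_congr rfl fun z _ => this z, ← Finset.sum_div]
    exact div_self h

lemma colU_recon (z0 : ζ) (ψ : α × ζ → ℂ) (a : α) (z : ζ) :
    (colNorm ψ a : ℂ) * colU z0 ψ a z = ψ (a, z) := by
  by_cases h : colNormSq ψ a = 0
  · have hz : Complex.normSq (ψ (a, z)) = 0 := by
      refine le_antisymm ?_ (Complex.normSq_nonneg _)
      rw [← h]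
      exact Finset.single_le_sum (f := fun z => Complex.normSq (ψ (a, z)))
        (fun z _ => Complex.normSq_nonneg _) (Finset.mem_univ z)
    have hψz : ψ (a, z) = 0 := Complex.normSq_eq_zero.mp hz
    have hn : colNorm ψ a = 0 := by rw [colNorm, h, Real.sqrt_zero]
    rw [hψz, hn]
    simp
  · have hn : colNorm ψ a ≠ 0 := by
      rw [colNorm]
      exact Real.sqrt_ne_zero'.mpr (lt_of_le_of_ne (colNormSq_nonneg ψ a) (Ne.symm h))
    rw [colU, if_neg h, mul_div_cancel₀]
    exact Complex.ofReal_ne_zero.mpr hn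

lemma colState_isState (ψ : α × ζ → ℂ) (hψ : ∑ p, Complex.normSq (ψ p) = 1) :
    IsState (colState ψ) := by
  constructor
  · set B : Matrix Unit α ℂ := Matrix.of fun _ a => ((colNorm ψ a : ℝ) : ℂ) with hBdef
    have : colState ψ = Bᴴ * B := by
      ext a b
      rw [gram_entry, Finset.sum_eq_single ()]
      rotate_left
      · intro b' _ hb'; exact absurd rfl hb'
      · intro h; exact absurd (Finset.mem_univ ()) h
      show ((colNorm ψ a * colNorm ψ b : ℝ) : ℂ) = (starRingEnd ℂ) ((colNorm ψ a : ℝ) : ℂ) * _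
      rw [Complex.conj_ofReal]
      push_cast
      rfl
    rw [this]
    exact Matrix.posSemidef_conjTranspose_mul_self B
  · rw [Matrix.trace]
    have : ∀ a, Matrix.diag (colState ψ) a = ((colNormSq ψ a : ℝ) : ℂ) := by
      intro a
      show ((colNorm ψ a * colNorm ψ a : ℝ) : ℂ) = _
      rw [colNorm, Real.mul_self_sqrt (colNormSq_nonneg ψ a)]
    rw [Finset.sum_congr rfl fun a _ => this a, ← Complex.ofReal_sum]
    have : ∑ a, colNormSq ψ a = 1 := by
      rw [← hψ]
      conv_rhs => rw [Fintype.sum_prod_type]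
      rfl
    rw [this, Complex.ofReal_one]

lemma embCh_colState (z0 : ζ) (ψ : α × ζ → ℂ) :
    embCh (colU z0 ψ) (colState ψ)
      = Matrix.of fun p q : α × ζ => ψ p * (starRingEnd ℂ) (ψ q) := by
  ext p q
  rw [embCh_apply]
  show ((colNorm ψ p.1 * colNorm ψ q.1 : ℝ) : ℂ) * _ = ψ p * (starRingEnd ℂ) (ψ q)
  calc ((colNorm ψ p.1 * colNorm ψ q.1 : ℝ) : ℂ)
        * (colU z0 ψ p.1 p.2 * (starRingEnd ℂ) (colU z0 ψ q.1 q.2))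
      = ((colNorm ψ p.1 : ℂ) * colU z0 ψ p.1 p.2)
        * (starRingEnd ℂ) ((colNorm ψ q.1 : ℂ) * colU z0 ψ q.1 q.2) := by
        rw [_root_.map_mul, Complex.conj_ofReal]
        push_cast
        ring
    _ = ψ (p.1, p.2) * (starRingEnd ℂ) (ψ (q.1, q.2)) := by
        rw [colU_recon, colU_recon]
    _ = ψ p * (starRingEnd ℂ) (ψ q) := rfl

end Emb

section Decomp

open Finset

lemma isState_decomp {n : Type*} [Fintype n] [DecidableEq n] {ρ : Matrix n n ℂ}
    (h : IsState ρ) :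
    ∃ (e : n → ℝ) (ψ : n → n → ℂ), (∀ k, 0 ≤ e k) ∧ (∑ k, e k) = 1 ∧
      (∀ k, ∑ p, Complex.normSq (ψ k p) = 1) ∧
      ∀ p q, ρ p q = ∑ k, ((e k : ℝ) : ℂ) * (ψ k p * (starRingEnd ℂ) (ψ k q)) := by
  obtain ⟨hpsd, htr⟩ := h
  have hH := hpsd.1
  set U : Matrix n n ℂ := (Matrix.IsHermitian.eigenvectorUnitary hH : Matrix n n ℂ) with hU
  set e := hH.eigenvalues with he
  have hent : ∀ p q, ρ p q = ∑ k, ((e k : ℝ) : ℂ) * (U p k * (starRingEnd ℂ) (U q k)) := by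
    intro p q
    conv_lhs => rw [hH.spectral_theorem_old]
    rw [Matrix.mul_apply]
    refine Finset.sum_congr rfl fun k _ => ?_
    rw [Matrix.mul_diagonal, Matrix.star_apply, Complex.star_def]
    simp only [Function.comp_apply]
    rw [show (RCLike.ofReal (e k) : ℂ) = ((e k : ℝ) : ℂ) from rfl]
    ring
  have hUU' : Uᴴ * U = 1 := by
    have := (Matrix.mem_unitaryGroup_iff').mp (Matrix.IsHermitian.eigenvectorUnitary hH).2
    simpa [Matrix.star_eq_conjTranspose] using this
  have hcolunit : ∀ k, ∑ p, Complex.normSq (U p k) = 1 := by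
    intro k
    have h1 : (Uᴴ * U) k k = 1 := by rw [hUU']; simp
    rw [Matrix.mul_apply] at h1
    have h2 : ∑ p, ((Complex.normSq (U p k) : ℝ) : ℂ) = 1 := by
      rw [← h1]
      refine Finset.sum_congr rfl fun p _ => ?_
      rw [Matrix.conjTranspose_apply, Complex.star_def, mul_comm]
      exact (Complex.mul_conj _).symm
    exact_mod_cast h2
  have hsum : ∑ k, e k = 1 := by
    have h1 : Matrix.trace ρ = ((∑ k, e k : ℝ) : ℂ) := by
      rw [Matrix.trace]
      have h2 : ∀ p, Matrix.diag ρ p = ∑ k, ((e k : ℝ) : ℂ) * ((Complex.normSq (U p k) : ℝ) : ℂ) := by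
        intro p
        show ρ p p = _
        rw [hent p p]
        refine Finset.sum_congr rfl fun k _ => ?_
        rw [Complex.mul_conj]
      rw [Finset.sum_congr rfl fun p _ => h2 p, Finset.sum_comm]
      rw [Complex.ofReal_sum]
      refine Finset.sum_congr rfl fun k _ => ?_
      rw [← Finset.mul_sum]
      have : ∑ p, ((Complex.normSq (U p k) : ℝ) : ℂ) = 1 := by
        rw [← Complex.ofReal_sum, hcolunit k, Complex.ofReal_one]
      rw [this, mul_one]
    rw [htr] at h1
    exact_mod_cast h1.symm
  exact ⟨e, fun k p => U p k, fun k => hpsd.eigenvalues_nonneg k, hsum, hcolunit, hent⟩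

end Decomp
section Prep

open Finset

variable {ι κ : Type*} [Fintype ι] [DecidableEq ι] [Fintype κ] [DecidableEq κ]

lemma trace_stdBasisMatrix' (i j : ι) :
    Matrix.trace (Matrix.single i j (1 : ℂ)) = if i = j then 1 else 0 := by
  by_cases h : i = j
  · subst h; rw [trace_stdBasisMatrix, if_pos rfl]
  · rw [if_neg h, Matrix.trace]
    refine Finset.sum_eq_zero fun a _ => ?_
    show (if i = a ∧ j = a then (1:ℂ) else 0) = 0
    rw [if_neg]
    rintro ⟨rfl, rfl⟩
    exact h rfl

/-- the trace-and-prepare channel `σ ↦ tr(σ)·|b0⟩⟨b0|` -/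
noncomputable def prepCh (b0 : κ) : SO ι κ where
  toFun σ := σ.trace • Matrix.single b0 b0 1
  map_add' := by intro x y; rw [Matrix.trace_add, add_smul]
  map_smul' := by intro c x; rw [Matrix.trace_smul, smul_assoc]; rfl

@[simp] lemma prepCh_apply (b0 : κ) (σ : Matrix ι ι ℂ) :
    prepCh b0 σ = σ.trace • Matrix.single b0 b0 1 := rfl

lemma prepCh_isChannel (b0 : κ) : IsChannel (prepCh (ι := ι) b0) := by
  constructor
  · set B : Matrix ι (κ × ι) ℂ :=
      Matrix.of fun m x => if x.1 = b0 ∧ x.2 = m then 1 else 0 with hBdef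
    have : choi (prepCh (ι := ι) b0) = Bᴴ * B := by
      ext ⟨p, i⟩ ⟨q, j⟩
      rw [gram_entry]
      have hlhs : choi (prepCh (ι := ι) b0) (p, i) (q, j)
          = (if i = j then 1 else 0) * (if b0 = p ∧ b0 = q then 1 else 0) := by
        show (Matrix.trace (Matrix.single i j (1:ℂ))
            • Matrix.single b0 b0 (1:ℂ)) p q = _
        rw [Matrix.smul_apply, trace_stdBasisMatrix']
        rw [show Matrix.single b0 b0 (1:ℂ) p q
            = if b0 = p ∧ b0 = q then 1 else 0 from rfl]
        rw [smul_eq_mul]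
      rw [hlhs]
      have hterm : ∀ m, (starRingEnd ℂ) (B m (p, i)) * B m (q, j)
          = (if p = b0 ∧ i = m then 1 else 0) * (if q = b0 ∧ j = m then 1 else 0) := by
        intro m
        have h1 : B m (p, i) = if p = b0 ∧ i = m then 1 else 0 := rfl
        have h2 : B m (q, j) = if q = b0 ∧ j = m then 1 else 0 := rfl
        rw [h1, h2]
        congr 1
        split_ifs <;> simp
      rw [Finset.sum_congr rfl fun m _ => hterm m]
      by_cases h1 : p = b0 <;> by_cases h2 : q = b0 <;> by_cases h3 : i = j <;>
        simp [h1, h2, h3, eq_comm, Finset.sum_ite_eq, Finset.sum_ite_eq'] <;>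
        grind
    rw [this]
    exact Matrix.posSemidef_conjTranspose_mul_self B
  · intro ρ
    show Matrix.trace (ρ.trace • Matrix.single b0 b0 (1:ℂ)) = ρ.trace
    rw [Matrix.trace_smul, trace_stdBasisMatrix, smul_eq_mul, mul_one]

lemma prepCh_isDI (b0 : κ) : IsDI (prepCh (ι := ι) b0) := by
  apply LinearMap.ext
  intro σ
  simp only [LinearMap.comp_apply, prepCh_apply]
  have : Matrix.trace (deph σ) = Matrix.trace σ := by
    rw [Matrix.trace, Matrix.trace]
    refine Finset.sum_congr rfl fun a _ => ?_
    show (if a = a then σ a a else 0) = σ a a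
    rw [if_pos rfl]
  rw [this]

lemma stdBasis_isState (a0 : ι) : IsState (Matrix.single a0 a0 (1 : ℂ)) := by
  constructor
  · have : Matrix.single a0 a0 (1 : ℂ)
        = Matrix.diagonal (fun i => if i = a0 then 1 else 0) := by
      ext i j
      show (if a0 = i ∧ a0 = j then (1:ℂ) else 0) = _
      rw [Matrix.diagonal_apply]
      by_cases h1 : i = j
      · subst h1
        by_cases h2 : i = a0 <;> simp [h2, eq_comm] <;> grind
      · rw [if_neg h1, if_neg]
        rintro ⟨rfl, rfl⟩
        exact h1 rfl
    rw [this]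
    refine Matrix.PosSemidef.diagonal ?_
    intro i
    dsimp only
    split_ifs
    · exact zero_le_one
    · exact le_refl 0
  · exact trace_stdBasisMatrix a0

lemma value_bound {A B C' : Type*} [Fintype A] [DecidableEq A] [Fintype B] [DecidableEq B]
    [Fintype C'] [DecidableEq C'] {Θ : SO B C'} (hΘ : IsChannel Θ) {Φ : SO A B}
    (hΦ : IsChannel Φ) {ρ : Matrix A A ℂ} (hρ : IsState ρ) {lam : ℝ}
    (hlam : lam ∈ Set.Icc (0:ℝ) 1) (φa : A → ℝ) :
    traceNorm (deph (Θ (Φ (diffOp lam φa ρ))))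
      ≤ (Fintype.card C' : ℝ) * ((Fintype.card B : ℝ) ^ 2 * ((Fintype.card A : ℝ) ^ 2 * 1)) := by
  rw [traceNorm_deph]
  have h1 : ∀ i j, ‖diffOp lam φa ρ i j‖ ≤ 1 :=
    diffOp_entry_abs_le hlam φa (isState_entry_abs_le hρ)
  have h2 : ∀ p q, ‖Φ (diffOp lam φa ρ) p q‖ ≤ (Fintype.card A : ℝ) ^ 2 * 1 :=
    channel_apply_entry_le hΦ zero_le_one h1
  have h3 : ∀ r s, ‖Θ (Φ (diffOp lam φa ρ)) r s‖
      ≤ (Fintype.card B : ℝ) ^ 2 * ((Fintype.card A : ℝ) ^ 2 * 1) :=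
    channel_apply_entry_le hΘ (by positivity) h2
  calc ∑ r, ‖Θ (Φ (diffOp lam φa ρ)) r r‖
      ≤ ∑ _r : C', (Fintype.card B : ℝ) ^ 2 * ((Fintype.card A : ℝ) ^ 2 * 1) :=
        Finset.sum_le_sum fun r _ => h3 r r
    _ = _ := by
        rw [Finset.sum_const, Finset.card_univ, nsmul_eq_mul]

end Prep
section Main

open Finset

lemma main_sSup {α β γ ζ : Type*} [Fintype α] [DecidableEq α] [Nonempty α]
    [Fintype β] [DecidableEq β] [Nonempty β] [Fintype γ] [DecidableEq γ] [Nonempty γ]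
    [Fintype ζ] [DecidableEq ζ] [Nonempty ζ]
    (lam : ℝ) (hlam : lam ∈ Set.Icc (0 : ℝ) 1) (φ : α → ℝ) (Θ : SO β γ) (hΘ : IsChannel Θ) :
    sSup {x : ℝ | ∃ (Φ : SO (α × ζ) β) (ρ : Matrix (α × ζ) (α × ζ) ℂ),
        IsChannel Φ ∧ IsDI Φ ∧ IsState ρ ∧
        x = traceNorm (deph (Θ (Φ (diffOp lam (fun p : α × ζ => φ p.1) ρ))))}
      = sSup {x : ℝ | ∃ (Φ : SO α β) (ρ : Matrix α α ℂ), IsChannel Φ ∧ IsDI Φ ∧ IsState ρ ∧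
        x = traceNorm (deph (Θ (Φ (diffOp lam φ ρ))))} := by
  classical
  set S : Set ℝ := {x : ℝ | ∃ (Φ : SO α β) (ρ : Matrix α α ℂ),
    IsChannel Φ ∧ IsDI Φ ∧ IsState ρ ∧
    x = traceNorm (deph (Θ (Φ (diffOp lam φ ρ))))} with hS
  set T : Set ℝ := {x : ℝ | ∃ (Φ : SO (α × ζ) β) (ρ : Matrix (α × ζ) (α × ζ) ℂ),
    IsChannel Φ ∧ IsDI Φ ∧ IsState ρ ∧
    x = traceNorm (deph (Θ (Φ (diffOp lam (fun p : α × ζ => φ p.1) ρ))))} with hT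
  have hSne : S.Nonempty := by
    refine ⟨_, ⟨prepCh (Classical.arbitrary β),
      Matrix.single (Classical.arbitrary α) (Classical.arbitrary α) 1,
      prepCh_isChannel _, prepCh_isDI _, stdBasis_isState _, rfl⟩⟩
  have hST : S ⊆ T := by
    rintro x ⟨Φ, ρ, hch, hdi, hst, rfl⟩
    exact ⟨Φ ∘ₗ ptr, tensPure (Classical.arbitrary ζ) ρ, hch.comp ptr_isChannel,
      hdi.comp' ptr_isDI, tensPure_isState _ hst, by
        rw [LinearMap.comp_apply, ptr_diffOp, ptr_tensPure]⟩
  have hTne : T.Nonempty := hSne.mono hST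
  have hbddT : BddAbove T := by
    refine ⟨(Fintype.card γ : ℝ) * ((Fintype.card β : ℝ) ^ 2
      * ((Fintype.card (α × ζ) : ℝ) ^ 2 * 1)), ?_⟩
    rintro x ⟨Φ, ρ, hch, hdi, hst, rfl⟩
    exact value_bound hΘ hch hst hlam _
  have hbddS : BddAbove S := hbddT.mono hST
  have hTle : ∀ x ∈ T, x ≤ sSup S := by
    rintro x ⟨Φ', ρ', hch', hdi', hst', rfl⟩
    obtain ⟨e, ψ, he0, hesum, hψunit, hent⟩ := isState_decomp hst'
    set z0 : ζ := Classical.arbitrary ζ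
    set P : (α × ζ) → Matrix (α × ζ) (α × ζ) ℂ :=
      fun k => Matrix.of fun p q => ψ k p * (starRingEnd ℂ) (ψ k q) with hP
    set M : (α × ζ) → Matrix γ γ ℂ :=
      fun k => Θ (Φ' (diffOp lam (fun p : α × ζ => φ p.1) (P k))) with hM
    have hρ'eq : ρ' = ∑ k, ((e k : ℝ) : ℂ) • P k := by
      ext p q
      rw [hent p q, Matrix.sum_apply]
      refine Finset.sum_congr rfl fun k _ => ?_
      rw [Matrix.smul_apply, smul_eq_mul]
      rfl
    have hmem : ∀ k, traceNorm (deph (M k)) ∈ S := by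
      intro k
      refine ⟨Φ' ∘ₗ embCh (colU z0 (ψ k)), colState (ψ k),
        hch'.comp (embCh_isChannel _ (colU_unit z0 (ψ k))),
        hdi'.comp' (embCh_isDI _), colState_isState (ψ k) (hψunit k), ?_⟩
      rw [LinearMap.comp_apply, embCh_diffOp, embCh_colState]
    have hkle : ∀ k, traceNorm (deph (M k)) ≤ sSup S := fun k => le_csSup hbddS (hmem k)
    have hlin : Θ (Φ' (diffOp lam (fun p : α × ζ => φ p.1) ρ'))
        = ∑ k, ((e k : ℝ) : ℂ) • M k := by
      rw [hρ'eq]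
      simp only [map_sum, _root_.map_smul, hM]
    have hstep : ∀ r, ‖(∑ k, ((e k : ℝ) : ℂ) • M k) r r‖
        ≤ ∑ k, e k * ‖M k r r‖ := by
      intro r
      rw [Matrix.sum_apply]
      refine (norm_sum_le _ _).trans (Finset.sum_le_sum fun k _ => ?_)
      rw [Matrix.smul_apply, smul_eq_mul, norm_mul, cabs_ofReal,
        _root_.abs_of_nonneg (he0 k)]
    calc traceNorm (deph (Θ (Φ' (diffOp lam (fun p : α × ζ => φ p.1) ρ'))))
        = ∑ r, ‖(∑ k, ((e k : ℝ) : ℂ) • M k) r r‖ := by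
          rw [traceNorm_deph, hlin]
      _ ≤ ∑ r, ∑ k, e k * ‖M k r r‖ := Finset.sum_le_sum fun r _ => hstep r
      _ = ∑ k, ∑ r, e k * ‖M k r r‖ := Finset.sum_comm
      _ = ∑ k, e k * traceNorm (deph (M k)) := by
          refine Finset.sum_congr rfl fun k _ => ?_
          rw [← Finset.mul_sum, traceNorm_deph]
      _ ≤ ∑ k, e k * sSup S :=
          Finset.sum_le_sum fun k _ => mul_le_mul_of_nonneg_left (hkle k) (he0 k)
      _ = sSup S := by rw [← Finset.sum_mul, hesum, one_mul]
  exact le_antisymm (csSup_le hTne hTle) (csSup_le_csSup hbddT hSne hST)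

end Main

/-- auxiliary systems do not change the pre-processed improvements:
with `φ̃(a,z) = φ(a)` (so that `Λ_{φ̃} = Λ_φ ⊗ id`), the measures agree. -/
theorem Mpre_aux_invariant {α β γ ζ : Type*} [Fintype α] [DecidableEq α] [Nonempty α]
    [Fintype β] [DecidableEq β] [Nonempty β] [Fintype γ] [DecidableEq γ] [Nonempty γ]
    [Fintype ζ] [DecidableEq ζ] [Nonempty ζ]
    (lam : ℝ) (hlam : lam ∈ Set.Icc (0 : ℝ) 1) (φ : α → ℝ)
    (Θ : SO β γ) (hΘ : IsChannel Θ) :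
    Mpre lam (fun p : α × ζ => φ p.1) Θ = Mpre lam φ Θ := by
  unfold Mpre
  congr 1
  exact main_sSup lam hlam φ Θ hΘ
end

section
/- For every pure bipartite state |ψ⟩_{AZ} there exist a detection incoherent channel Φ^{AZ←A} and a pure state |φ⟩_A such that Φ^{AZ←A}(λ − μΛ_φ^A)(|φ⟩⟨φ|_A) = ((λ − μΛ_φ^A) ⊗ id^Z)(|ψ⟩⟨ψ|_{AZ}). -/
open Matrix Complex
open scoped ComplexOrder

section Aux

variable {ι κ : Type*} [Fintype ι] [DecidableEq ι] [Fintype κ] [DecidableEq κ]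

/-- Conjugation superoperator `ρ ↦ V ρ Vᴴ`. -/
noncomputable def conjSO (V : Matrix κ ι ℂ) : SO ι κ where
  toFun ρ := V * ρ * Vᴴ
  map_add' x y := by rw [Matrix.mul_add, Matrix.add_mul]
  map_smul' c x := by rw [Matrix.mul_smul, Matrix.smul_mul]; rfl

lemma conjSO_apply (V : Matrix κ ι ℂ) (ρ : Matrix ι ι ℂ) : conjSO V ρ = V * ρ * Vᴴ := rfl

lemma choi_conjSO (V : Matrix κ ι ℂ) :
    choi (conjSO V) = Matrix.vecMulVec (fun p : κ × ι => V p.1 p.2)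
      (star fun p : κ × ι => V p.1 p.2) := by
  ext p q
  simp only [choi, conjSO_apply, Matrix.of_apply, Matrix.vecMulVec_apply, Pi.star_apply,
    Matrix.mul_apply, Matrix.conjTranspose_apply]
  rw [Finset.sum_eq_single q.2]
  · rw [Finset.sum_eq_single p.2]
    · simp [Matrix.single_apply_same]
    · intro b _ hb
      simp [Matrix.single, Ne.symm hb]
    · simp
  · intro c _ hc
    rw [Finset.sum_eq_zero]
    · simp
    intro b _
    simp [Matrix.single, Ne.symm hc]
  · simp

omit [DecidableEq ι] in
lemma posSemidef_vecMulVec_star (w : ι → ℂ) :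
    (Matrix.vecMulVec w (star w)).PosSemidef := by
  rw [Matrix.posSemidef_iff_dotProduct_mulVec]
  constructor
  · ext i j
    simp [Matrix.conjTranspose_apply, Matrix.vecMulVec_apply, mul_comm]
  · intro x
    have h : dotProduct (star x) (Matrix.vecMulVec w (star w) *ᵥ x)
        = star (∑ j, x j * star (w j)) * (∑ j, x j * star (w j)) := by
      simp only [dotProduct, Matrix.mulVec, Matrix.vecMulVec_apply, Pi.star_apply,
        dotProduct, star_sum, star_mul', star_star, Finset.mul_sum, Finset.sum_mul]
      rw [Finset.sum_comm]
      refine Finset.sum_congr rfl fun i _ => Finset.sum_congr rfl fun j _ => by ring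
    rw [h]
    exact star_mul_self_nonneg _

lemma isChannel_conjSO (V : Matrix κ ι ℂ) (hV : Vᴴ * V = 1) : IsChannel (conjSO V) := by
  refine ⟨?_, ?_⟩
  · rw [choi_conjSO]; exact posSemidef_vecMulVec_star _
  · intro ρ
    rw [conjSO_apply, Matrix.trace_mul_cycle, hV, Matrix.one_mul]

end Aux

/-- for every pure bipartite state `ψ` on `A ⊗ Z` there are a detection
incoherent channel `Φ : A → A ⊗ Z` and a pure state `v` on `A` with
`Φ (λ − μΛ_φ)(|v⟩⟨v|) = ((λ − μΛ_φ) ⊗ id)(|ψ⟩⟨ψ|)`. -/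
theorem exists_DI_expansion {A Z : Type*} [Fintype A] [DecidableEq A] [Nonempty A]
    [Fintype Z] [DecidableEq Z] [Nonempty Z]
    (lam : ℝ) (hlam : lam ∈ Set.Icc (0 : ℝ) 1) (φ : A → ℝ)
    (ψ : A × Z → ℂ) (hψ : ∑ p, ‖ψ p‖ ^ 2 = 1) :
    ∃ (Φ : SO A (A × Z)) (v : A → ℂ),
      IsChannel Φ ∧ IsDI Φ ∧ (∑ a, ‖v a‖ ^ 2 = 1) ∧
      Φ (diffOp lam φ (Matrix.vecMulVec v (star v)))
        = tensorId (diffOp lam φ) (Matrix.vecMulVec ψ (star ψ)) := by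
  classical
  set s : A → ℝ := fun a => ∑ z, ‖ψ (a, z)‖ ^ 2 with hs_def
  have hs0 : ∀ a, 0 ≤ s a := fun a => Finset.sum_nonneg fun z _ => by positivity
  have hψ0 : ∀ a, s a = 0 → ∀ z, ψ (a, z) = 0 := by
    intro a ha z
    have := (Finset.sum_eq_zero_iff_of_nonneg (fun z _ => by positivity)).1 ha z (Finset.mem_univ z)
    exact norm_eq_zero.1 (by nlinarith [norm_nonneg (ψ (a, z))])
  set v : A → ℂ := fun a => ((Real.sqrt (s a) : ℝ) : ℂ) with hv_def
  have hvs : ∀ a, star (v a) * v a = (s a : ℂ) := by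
    intro a
    simp only [hv_def, Complex.star_def, Complex.conj_ofReal, ← Complex.ofReal_mul]
    rw [Real.mul_self_sqrt (hs0 a)]
  obtain ⟨z₀⟩ := (inferInstance : Nonempty Z)
  set V : Matrix (A × Z) A ℂ := Matrix.of fun p a =>
    if p.1 = a then (if s a = 0 then (if p.2 = z₀ then 1 else 0) else ψ (a, p.2) / v a)
    else 0 with hV_def
  have hVzero : ∀ (p : A × Z) (a : A), p.1 ≠ a → V p a = 0 := by
    intro p a h; simp [hV_def, h]
  have hVv : ∀ p : A × Z, V p p.1 * v p.1 = ψ p := by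
    intro p
    by_cases h : s p.1 = 0
    · have : v p.1 = 0 := by simp [hv_def, h]
      rw [this, mul_zero, hψ0 p.1 h p.2]
    · have hv0 : v p.1 ≠ 0 := by
        have hpos : 0 < Real.sqrt (s p.1) := Real.sqrt_pos.2 ((hs0 p.1).lt_of_ne (Ne.symm h))
        simp only [hv_def, ne_eq, Complex.ofReal_eq_zero]
        exact hpos.ne'
      simp only [hV_def, Matrix.of_apply, if_pos rfl, if_neg h]
      exact div_mul_cancel₀ _ hv0
  have hVV : Vᴴ * V = 1 := by
    ext a b
    simp only [Matrix.mul_apply, Matrix.conjTranspose_apply]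
    by_cases hab : a = b
    · subst hab
      rw [Fintype.sum_prod_type]
      rw [Finset.sum_eq_single a]
      · by_cases h : s a = 0
        · simp [hV_def, h, Finset.sum_ite_eq']
        · have hsa : (s a : ℂ) ≠ 0 := by exact_mod_cast h
          have hterm : ∀ z : Z, star (V (a, z) a) * V (a, z) a
              = ((‖ψ (a, z)‖ ^ 2 : ℝ) : ℂ) / (s a : ℂ) := by
            intro z
            simp only [hV_def, Matrix.of_apply, if_neg h, ite_true, eq_self_iff_true]
            rw [star_div₀, div_mul_div_comm, hvs]
            congr 1
            rw [Complex.star_def, ← Complex.normSq_eq_conj_mul_self, Complex.normSq_eq_norm_sq]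
          simp only [Matrix.one_apply_eq, hterm]
          rw [← Finset.sum_div,
            show (∑ z : Z, ((‖ψ (a, z)‖ ^ 2 : ℝ) : ℂ)) = (s a : ℂ) from by
              rw [hs_def]; push_cast; rfl]
          exact div_self hsa
      · intro b _ hb
        rw [Finset.sum_eq_zero]
        intro z _
        rw [hVzero (b, z) a (by simpa using hb)]
        simp
      · simp
    · rw [Finset.sum_eq_zero, (Matrix.one_apply_ne hab).symm]
      intro p _
      by_cases h : p.1 = a
      · rw [hVzero p b (h ▸ hab), mul_zero]
      · rw [hVzero p a h]; simp
  have hentry : ∀ (ρ : Matrix A A ℂ) (p q : A × Z),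
      (conjSO V ρ) p q = V p p.1 * ρ p.1 q.1 * star (V q q.1) := by
    intro ρ p q
    simp only [conjSO_apply, Matrix.mul_apply, Matrix.conjTranspose_apply]
    rw [show (∑ c, (∑ b, V p b * ρ b c) * star (V q c))
          = (∑ b, V p b * ρ b q.1) * star (V q q.1) from
        Finset.sum_eq_single q.1
          (fun c _ hc => by rw [hVzero q c (Ne.symm hc)]; simp) (by simp),
      show (∑ b, V p b * ρ b q.1) = V p p.1 * ρ p.1 q.1 from
        Finset.sum_eq_single p.1
          (fun b _ hb => by rw [hVzero p b (Ne.symm hb)]; simp) (by simp)]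
  refine ⟨conjSO V, v, isChannel_conjSO V hVV, ?_, ?_, ?_⟩
  · -- IsDI
    refine LinearMap.ext fun ρ => ?_
    ext p q
    simp only [LinearMap.comp_apply, deph, LinearMap.coe_mk, AddHom.coe_mk, Matrix.of_apply]
    by_cases hpq : p = q
    · subst hpq
      rw [if_pos rfl, if_pos rfl, hentry, hentry]
      simp
    · rw [if_neg hpq, if_neg hpq]
  · -- normalization
    rw [← hψ, Fintype.sum_prod_type]
    refine Finset.sum_congr rfl fun a _ => ?_
    simp only [hv_def, Complex.norm_real, Real.norm_eq_abs, _root_.sq_abs,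
      Real.sq_sqrt (hs0 a), hs_def]
    exact Real.sq_sqrt (hs0 a)
  · -- main equation
    ext p q
    rw [hentry]
    have hd : ∀ (w : A → ℂ) (a b : A), (diffOp lam φ (Matrix.vecMulVec w (star w))) a b
        = ((lam : ℂ) - ((1 - lam : ℝ) : ℂ) * Complex.exp (Complex.I * ((φ a : ℂ) - (φ b : ℂ))))
          * (w a * star (w b)) := by
      intro w a b
      simp only [diffOp, LinearMap.sub_apply, LinearMap.smul_apply, LinearMap.id_apply,
        phaseCh, LinearMap.coe_mk, AddHom.coe_mk, Matrix.sub_apply, Matrix.smul_apply,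
        Matrix.of_apply, Matrix.vecMulVec_apply, Pi.star_apply, smul_eq_mul]
      ring
    rw [hd]
    have hsv : ∀ a, star (v a) = v a := fun a => by
      simp [hv_def, Complex.star_def, Complex.conj_ofReal]
    have hrhs : (tensorId (diffOp lam φ) (Matrix.vecMulVec ψ (star ψ))) p q
        = ((lam : ℂ) - ((1 - lam : ℝ) : ℂ)
            * Complex.exp (Complex.I * ((φ p.1 : ℂ) - (φ q.1 : ℂ))))
          * (ψ p * star (ψ q)) := by
      simp only [tensorId, LinearMap.coe_mk, AddHom.coe_mk, Matrix.of_apply,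
        Matrix.vecMulVec_apply, Pi.star_apply]
      have hdE : ∀ i j : A, (diffOp lam φ (Matrix.single i j (1 : ℂ))) p.1 q.1
          = if i = p.1 then (if j = q.1 then
              ((lam : ℂ) - ((1 - lam : ℝ) : ℂ)
                * Complex.exp (Complex.I * ((φ p.1 : ℂ) - (φ q.1 : ℂ)))) else 0) else 0 := by
        intro i j
        simp only [diffOp, LinearMap.sub_apply, LinearMap.smul_apply, LinearMap.id_apply,
          phaseCh, LinearMap.coe_mk, AddHom.coe_mk, Matrix.sub_apply, Matrix.smul_apply,
          Matrix.of_apply, smul_eq_mul, Matrix.single]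
        by_cases hi : i = p.1 <;> by_cases hj : j = q.1 <;> simp [hi, hj] <;> ring
      simp only [hdE, ite_mul, zero_mul]
      rw [Finset.sum_eq_single p.1 (fun i _ hi => Finset.sum_eq_zero fun j _ => by simp [hi])
            (by simp),
          Finset.sum_eq_single q.1 (fun j _ hj => by simp [hj]) (by simp)]
      simp only [eq_self_iff_true, if_true, ite_true, Prod.mk.eta]
    rw [hrhs, ← hVv p, ← hVv q, star_mul', hsv q.1]
    ring
end

section
/- Let Ψ^{C←BZ} and Θ^{B←A} be quantum channels and ρ_{AZ} an incoherent (diagonal) state. Then there exist a probability distribution {p_i}, incoherent states {ρ_{|i}} on A, and channels {Ψ_i^{C←B}} such that Ψ^{C←BZ}(Θ^{B←A} ⊗ id^Z)(ρ_{AZ}) = Σ_i p_i Ψ_i^{C←B} Θ^{B←A}(ρ_{|i}). Moreover, if Ψ^{C←BZ} is maximally incoherent (MIO), the Ψ_i^{C←B} can be chosen in MIO. -/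
open Matrix Complex
open scoped ComplexOrder

section Aux

variable {A B C Z : Type*} [Fintype A] [DecidableEq A] [Fintype B] [DecidableEq B]
  [Fintype C] [DecidableEq C] [Fintype Z] [DecidableEq Z]

/-- Embedding `X ↦ X ⊗ |i⟩⟨i|`. -/
noncomputable def embId (i : Z) : Matrix B B ℂ →ₗ[ℂ] Matrix (B × Z) (B × Z) ℂ where
  toFun X := Matrix.of fun p q => if p.2 = i ∧ q.2 = i then X p.1 q.1 else 0
  map_add' := by
    intro x y; ext p q
    by_cases h : p.2 = i ∧ q.2 = i <;> simp [h]
  map_smul' := by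
    intro c x; ext p q
    by_cases h : p.2 = i ∧ q.2 = i <;> simp [h]

lemma embId_std (i : Z) (b b' : B) :
    embId (i := i) (Matrix.single b b' (1:ℂ)) =
      Matrix.single ((b,i) : B × Z) (b',i) 1 := by
  ext p q
  rcases p with ⟨pb, pz⟩; rcases q with ⟨qb, qz⟩
  simp only [embId, LinearMap.coe_mk, AddHom.coe_mk, Matrix.of_apply,
    Matrix.single, Matrix.of_apply, Prod.mk.injEq]
  split_ifs <;> aesop

lemma choi_comp_embId (Ψ : SO (B × Z) C) (i : Z) :
    choi (Ψ ∘ₗ embId (i := i)) =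
      (choi Ψ).submatrix (fun p : C × B => (p.1, (p.2, i))) (fun p : C × B => (p.1, (p.2, i))) := by
  ext p q
  simp [choi, embId_std, Matrix.submatrix_apply]

lemma trace_embId (i : Z) (X : Matrix B B ℂ) : (embId (i := i) X).trace = X.trace := by
  simp only [Matrix.trace, Matrix.diag, embId, LinearMap.coe_mk, AddHom.coe_mk, Matrix.of_apply]
  rw [Fintype.sum_prod_type]
  simp [Finset.sum_ite_eq']

lemma deph_comp_embId (i : Z) :
    (deph : SO (B × Z) (B × Z)) ∘ₗ embId (i := i) = embId (i := i) ∘ₗ (deph : SO B B) := by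
  apply LinearMap.ext; intro X
  ext p q
  rcases p with ⟨pb, pz⟩; rcases q with ⟨qb, qz⟩
  simp only [LinearMap.comp_apply, deph, embId, LinearMap.coe_mk, AddHom.coe_mk,
    Matrix.of_apply, Prod.mk.injEq]
  split_ifs <;> aesop (add simp Prod.ext_iff)

lemma deph_diagonal (f : B → ℂ) : deph (Matrix.diagonal f) = Matrix.diagonal f := by
  ext p q
  by_cases h : p = q <;> simp [deph, Matrix.diagonal, h]

lemma diagonal_eq_sum_std (f : B → ℂ) :
    Matrix.diagonal f = ∑ i, f i • Matrix.single i i (1:ℂ) := by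
  ext p q
  simp only [Matrix.sum_apply, Matrix.smul_apply, Matrix.single, Matrix.of_apply,
    smul_eq_mul]
  by_cases h : p = q
  · subst h; simp [Matrix.diagonal, Finset.sum_ite_eq']
  · simp only [Matrix.diagonal_apply_ne _ h]
    apply (Finset.sum_eq_zero _).symm
    intro i _
    split_ifs <;> aesop

lemma complex_nonneg_eq_re {z : ℂ} (hz : 0 ≤ z) : z = (z.re : ℂ) := by
  rw [Complex.le_def] at hz
  apply Complex.ext <;> simp [hz.2.symm]

end Aux

/-- decomposition of `Ψ (Θ ⊗ id)(ρ)` for an incoherent input state `ρ` on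
`A ⊗ Z` into a convex combination of `Ψᵢ Θ (ρ|ᵢ)` with incoherent `ρ|ᵢ`; if `Ψ` is MIO the
`Ψᵢ` can be chosen MIO. -/
theorem post_tensor_decomposition {A B C Z : Type*} [Fintype A] [DecidableEq A] [Nonempty A]
    [Fintype B] [DecidableEq B] [Nonempty B] [Fintype C] [DecidableEq C] [Nonempty C]
    [Fintype Z] [DecidableEq Z] [Nonempty Z]
    (Ψ : SO (B × Z) C) (hΨ : IsChannel Ψ) (Θ : SO A B) (hΘ : IsChannel Θ)
    (ρ : Matrix (A × Z) (A × Z) ℂ) (hρ : IsState ρ) (hinc : deph ρ = ρ) :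
    ∃ (p : Z → ℝ) (ρi : Z → Matrix A A ℂ) (Ψi : Z → SO B C),
      (∀ i, 0 ≤ p i) ∧ (∑ i, p i) = 1 ∧
      (∀ i, IsState (ρi i) ∧ deph (ρi i) = ρi i) ∧
      (∀ i, IsChannel (Ψi i)) ∧
      Ψ (tensorId Θ ρ) = ∑ i, (p i : ℂ) • (Ψi i) (Θ (ρi i)) ∧
      (IsMIO Ψ → ∀ i, IsMIO (Ψi i)) := by
  classical
  obtain ⟨hpsd, htr⟩ := hρ
  set d : A × Z → ℂ := fun q => ρ q q with hd
  have hρdiag : ρ = Matrix.diagonal d := by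
    ext x y
    by_cases h : x = y
    · subst h; simp [Matrix.diagonal, d]
    · have h1 : deph ρ x y = ρ x y := by rw [hinc]
      have h2 : deph ρ x y = 0 := by simp [deph, h]
      rw [Matrix.diagonal_apply_ne _ h, ← h1, h2]
  have hdnn : ∀ q, 0 ≤ d q := by
    rw [hρdiag] at hpsd
    exact Matrix.posSemidef_diagonal_iff.mp hpsd
  have hdre : ∀ q, 0 ≤ (d q).re := fun q => ((Complex.le_def.mp (hdnn q)).1)
  set p : Z → ℝ := fun z => (∑ a, d (a, z)).re with hp
  have hpcast : ∀ z, ((p z : ℝ) : ℂ) = ∑ a, d (a, z) := by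
    intro z
    have h0 : 0 ≤ ∑ a, d (a, z) := Finset.sum_nonneg fun a _ => hdnn _
    rw [hp]; exact (complex_nonneg_eq_re h0).symm
  have hpnn : ∀ z, 0 ≤ p z := by
    intro z
    rw [hp]
    simpa [Complex.re_sum] using Finset.sum_nonneg fun a (_ : a ∈ Finset.univ) => hdre (a, z)
  have hptot : ∑ z, p z = 1 := by
    have h1 : ∑ z, ∑ a, d (a, z) = 1 := by
      rw [Finset.sum_comm, ← Fintype.sum_prod_type]
      simpa [Matrix.trace, Matrix.diag, d] using htr
    have := congrArg Complex.re h1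
    simpa [Complex.re_sum, hp] using this
  have hblock0 : ∀ z, p z = 0 → ∀ a, d (a, z) = 0 := by
    intro z hz a
    have hre : (d (a, z)).re = 0 := by
      have hsum0 : ∑ a, (d (a, z)).re = 0 := by
        have := hpcast z
        rw [hz] at this
        have h2 : (0 : ℂ) = ∑ a, d (a, z) := by simpa using this
        have := congrArg Complex.re h2
        simpa [Complex.re_sum] using this.symm
      exact (Finset.sum_eq_zero_iff_of_nonneg
        (fun a _ => hdre (a, z))).mp hsum0 a (Finset.mem_univ a)
    rw [complex_nonneg_eq_re (hdnn (a, z)), hre]; simp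
  set a0 : A := Classical.arbitrary A with ha0
  set ρi : Z → Matrix A A ℂ := fun z =>
    if p z = 0 then Matrix.diagonal (fun a => if a = a0 then 1 else 0)
    else ((p z : ℂ))⁻¹ • Matrix.diagonal (fun a => d (a, z)) with hρi
  have hsmul_diag : ∀ (c : ℂ) (f : A → ℂ),
      c • Matrix.diagonal f = Matrix.diagonal (fun a => c * f a) := by
    intro c f
    ext x y
    by_cases h : x = y
    · subst h; simp [Matrix.diagonal]
    · simp [Matrix.diagonal_apply_ne _ h]
  have hpsmul : ∀ z, (p z : ℂ) • ρi z = Matrix.diagonal (fun a => d (a, z)) := by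
    intro z
    by_cases hz : p z = 0
    · have : (fun a => d (a, z)) = fun _ => (0 : ℂ) := funext fun a => hblock0 z hz a
      rw [this, hρi]
      simp [hz]
    · rw [hρi]
      simp only [if_neg hz, smul_smul]
      rw [mul_inv_cancel₀ (by exact_mod_cast hz), one_smul]
  have hρistate : ∀ z, IsState (ρi z) ∧ deph (ρi z) = ρi z := by
    intro z
    by_cases hz : p z = 0
    · refine ⟨⟨?_, ?_⟩, ?_⟩
      · rw [hρi]; simp only [if_pos hz]
        refine Matrix.PosSemidef.diagonal fun a => ?_
        simp only [Pi.zero_apply]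
        by_cases h : a = a0 <;> simp [h]
      · rw [hρi]; simp only [if_pos hz]
        simp [Matrix.trace_diagonal, Finset.sum_ite_eq']
      · rw [hρi]; simp only [if_pos hz, deph_diagonal]
    · refine ⟨⟨?_, ?_⟩, ?_⟩
      · rw [hρi]; simp only [if_neg hz]
        rw [hsmul_diag]
        refine Matrix.PosSemidef.diagonal fun a => ?_
        simp only [Pi.zero_apply]
        rw [complex_nonneg_eq_re (hdnn (a, z))]
        have : ((p z : ℝ) : ℂ)⁻¹ * (((d (a, z)).re : ℝ) : ℂ)
            = (((p z)⁻¹ * (d (a, z)).re : ℝ) : ℂ) := by push_cast; ring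
        rw [this]
        rw [Complex.zero_le_real]
        exact mul_nonneg (inv_nonneg.mpr (hpnn z)) (hdre (a, z))
      · rw [hρi]; simp only [if_neg hz]
        rw [Matrix.trace_smul, Matrix.trace_diagonal]
        rw [← hpcast z] at *
        rw [smul_eq_mul, inv_mul_cancel₀ (by exact_mod_cast hz)]
      · rw [hρi]; simp only [if_neg hz, LinearMap.map_smul, deph_diagonal]
  set Ψi : Z → SO B C := fun z => Ψ ∘ₗ embId (i := z) with hΨi
  have hch : ∀ z, IsChannel (Ψi z) := by
    intro z
    constructor
    · rw [hΨi]; simp only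
      rw [choi_comp_embId]
      exact (hΨ.1).submatrix _
    · intro X
      rw [hΨi]; simp only [LinearMap.comp_apply]
      rw [hΨ.2, trace_embId]
  have hΘdiag : ∀ (f : A → ℂ) (x : B) (y : B),
      Θ (Matrix.diagonal f) x y = ∑ i, Θ (Matrix.single i i 1) x y * f i := by
    intro f x y
    rw [diagonal_eq_sum_std, map_sum, Matrix.sum_apply]
    refine Finset.sum_congr rfl fun i _ => ?_
    rw [LinearMap.map_smul, Matrix.smul_apply, smul_eq_mul, mul_comm]
  have htens : tensorId Θ ρ = ∑ z, embId (i := z) (Θ (Matrix.diagonal fun a => d (a, z))) := by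
    ext x y
    rcases x with ⟨xb, xz⟩; rcases y with ⟨yb, yz⟩
    rw [Matrix.sum_apply]
    simp only [tensorId, embId, LinearMap.coe_mk, AddHom.coe_mk, Matrix.of_apply]
    by_cases h : xz = yz
    · subst h
      have hrhs : ∑ z, (if xz = z ∧ xz = z then Θ (Matrix.diagonal fun a => d (a, z)) xb yb
          else 0) = Θ (Matrix.diagonal fun a => d (a, xz)) xb yb := by
        simp [Finset.sum_ite_eq']
      rw [hrhs, hΘdiag]
      refine Finset.sum_congr rfl fun i _ => ?_
      rw [hρdiag]
      rw [Finset.sum_eq_single i]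
      · simp [Matrix.diagonal_apply, d]
      · intro j _ hj
        rw [Matrix.diagonal_apply_ne _ (by simp [Prod.ext_iff]; intro h; exact absurd h.symm hj)]
        simp
      · intro h; exact absurd (Finset.mem_univ i) h
    · rw [hρdiag]
      have hlhs : ∀ i j : A, Θ (Matrix.single i j 1) xb yb *
          Matrix.diagonal d (i, xz) (j, yz) = 0 := by
        intro i j
        rw [Matrix.diagonal_apply_ne _ (by simp [Prod.ext_iff]; intro _ h2; exact absurd h2 h)]
        simp
      simp only [hlhs, Finset.sum_const_zero]
      refine (Finset.sum_eq_zero fun z _ => ?_).symm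
      rw [if_neg]
      rintro ⟨h1, h2⟩
      exact h (h1.trans h2.symm)
  have hmain : Ψ (tensorId Θ ρ) = ∑ z, (p z : ℂ) • (Ψi z) (Θ (ρi z)) := by
    rw [htens, map_sum]
    refine Finset.sum_congr rfl fun z _ => ?_
    rw [← hpsmul z, LinearMap.map_smul, LinearMap.map_smul, LinearMap.map_smul]
    rfl
  refine ⟨p, ρi, Ψi, hpnn, hptot, hρistate, hch, hmain, ?_⟩
  intro hM z
  have key : (deph : SO (B × Z) (B × Z)) ∘ₗ embId (i := z) = embId (i := z) ∘ₗ (deph : SO B B) :=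
    deph_comp_embId z
  show (Ψ ∘ₗ embId (i := z)) ∘ₗ deph = deph ∘ₗ (Ψ ∘ₗ embId (i := z)) ∘ₗ deph
  calc (Ψ ∘ₗ embId (i := z)) ∘ₗ deph
      = Ψ ∘ₗ (embId (i := z) ∘ₗ deph) := by rw [LinearMap.comp_assoc]
    _ = Ψ ∘ₗ (deph ∘ₗ embId (i := z)) := by rw [key]
    _ = (Ψ ∘ₗ deph) ∘ₗ embId (i := z) := by rw [LinearMap.comp_assoc]
    _ = (deph ∘ₗ Ψ ∘ₗ deph) ∘ₗ embId (i := z) := congrArg (fun T => T ∘ₗ embId (i := z)) hM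
    _ = deph ∘ₗ Ψ ∘ₗ (deph ∘ₗ embId (i := z)) := by
        rw [LinearMap.comp_assoc, LinearMap.comp_assoc]
    _ = deph ∘ₗ Ψ ∘ₗ (embId (i := z) ∘ₗ deph) := by rw [key]
    _ = deph ∘ₗ (Ψ ∘ₗ embId (i := z)) ∘ₗ deph := by rw [LinearMap.comp_assoc]
end
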